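/- arXiv:1910.06891 — 6 statements merged into one kernel-verified Lean document; each statement's English description precedes it below -/
import Mathlib

section
/- Let 0 < p < 1 and let W be the infinite diagonal matrix with diagonal entries μ_j ∈ ℂ, j ≥ 0. Then W ∈ 𝒲_p if and only if ∑_{j≥0} |μ_j|^{p/(1−p)} < ∞, and in that case ‖W‖_{𝒲_p} = (∑_{j≥0} |μ_j|^{p/(1−p)})^{(1−p)/p}. -/
open scoped BigOperators

/-- The `Ξ_p = ℓ^{2p♯}(ℓ^{2p})` norm of a matrix,
`‖X‖_{Ξ_p} = (∑_j (∑_k |x_{jk}|^{2p})^{1/(1-p)})^{(1-p)/(2p)}`. -/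
noncomputable def xiNorm (p : ℝ) (X : ℕ → ℕ → ℂ) : ℝ :=
  (∑' j, (∑' k, ‖X j k‖ ^ (2 * p)) ^ (1 / (1 - p))) ^ ((1 - p) / (2 * p))

/-- `X` has finite `Ξ_p`-norm: all the sums defining `xiNorm` converge. -/
def HasXiNorm (p : ℝ) (X : ℕ → ℕ → ℂ) : Prop :=
  (∀ j, Summable fun k => ‖X j k‖ ^ (2 * p)) ∧
    Summable fun j => (∑' k, ‖X j k‖ ^ (2 * p)) ^ (1 / (1 - p))

/-- The set of values `‖X‖_{Ξ_p} ‖Y‖_{Ξ_p}` over all factorizations `W = X Yᵗ`,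
i.e. `w_{jk} = ∑_l x_{jl} y_{kl}`, with `X, Y` of finite `Ξ_p`-norm.
`W ∈ 𝒲_p` iff this set is nonempty, and `‖W‖_{𝒲_p}` is its infimum. -/
noncomputable def wReprVals (p : ℝ) (W : ℕ → ℕ → ℂ) : Set ℝ :=
  {c | ∃ X Y : ℕ → ℕ → ℂ, HasXiNorm p X ∧ HasXiNorm p Y ∧
    (∀ j k, HasSum (fun l => X j l * Y k l) (W j k)) ∧
    c = xiNorm p X * xiNorm p Y}

/-- Cauchy–Schwarz for infinite sums of nonnegative reals. -/
lemma tsum_cs {A B : ℕ → ℝ} (hA : ∀ i, 0 ≤ A i) (hB : ∀ i, 0 ≤ B i)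
    (hA2 : Summable fun i => A i ^ 2) (hB2 : Summable fun i => B i ^ 2) :
    Summable (fun i => A i * B i) ∧
      ∑' i, A i * B i ≤ Real.sqrt (∑' i, A i ^ 2) * Real.sqrt (∑' i, B i ^ 2) := by
  have hsum : Summable fun i => A i * B i := by
    refine Summable.of_nonneg_of_le (fun i => mul_nonneg (hA i) (hB i))
      (fun i => ?_) ((hA2.add hB2).div_const 2)
    nlinarith [sq_nonneg (A i - B i)]
  refine ⟨hsum, ?_⟩
  refine Summable.tsum_le_of_sum_le hsum fun s => ?_
  have h1 : (∑ i ∈ s, A i * B i) ^ 2 ≤ (∑' i, A i ^ 2) * ∑' i, B i ^ 2 := by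
    refine le_trans (Finset.sum_mul_sq_le_sq_mul_sq s A B) ?_
    exact mul_le_mul (Summable.sum_le_tsum s (fun i _ => sq_nonneg _) hA2)
      (Summable.sum_le_tsum s (fun i _ => sq_nonneg _) hB2)
      (Finset.sum_nonneg fun i _ => sq_nonneg _) (tsum_nonneg fun i => sq_nonneg _)
  have h2 : 0 ≤ ∑ i ∈ s, A i * B i := Finset.sum_nonneg fun i _ => mul_nonneg (hA i) (hB i)
  calc ∑ i ∈ s, A i * B i
      ≤ Real.sqrt ((∑' i, A i ^ 2) * ∑' i, B i ^ 2) := by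
        rw [show (∑ i ∈ s, A i * B i) = Real.sqrt ((∑ i ∈ s, A i * B i) ^ 2) from
          (Real.sqrt_sq h2).symm]
        exact Real.sqrt_le_sqrt h1
    _ = Real.sqrt (∑' i, A i ^ 2) * Real.sqrt (∑' i, B i ^ 2) :=
        Real.sqrt_mul (tsum_nonneg fun i => sq_nonneg _) _

/-- `∑ cᵢ^q ≤ (∑ cᵢ)^q` for `q ≥ 1` and nonnegative `cᵢ`. -/
lemma tsum_rpow_le {c : ℕ → ℝ} (hc : ∀ i, 0 ≤ c i) (hs : Summable c) {q : ℝ} (hq : 1 ≤ q) :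
    Summable (fun i => c i ^ q) ∧ ∑' i, c i ^ q ≤ (∑' i, c i) ^ q := by
  have hq0 : 0 < q := lt_of_lt_of_le one_pos hq
  set T := ∑' i, c i with hT
  have hT0 : 0 ≤ T := tsum_nonneg hc
  have hle : ∀ i, c i ^ q ≤ c i * T ^ (q - 1) := by
    intro i
    have hci : c i ≤ T := Summable.le_tsum hs i fun j _ => hc j
    calc c i ^ q = c i * c i ^ (q - 1) := by
          rcases eq_or_lt_of_le (hc i) with h | h
          · rw [← h, Real.zero_rpow (ne_of_gt hq0)]
            rcases eq_or_lt_of_le hq with h1 | h1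
            · rw [← h1]; norm_num
            · rw [Real.zero_rpow (by linarith)]; ring
          · nth_rewrite 1 [show q = 1 + (q - 1) by ring]
            rw [Real.rpow_add h, Real.rpow_one]
      _ ≤ c i * T ^ (q - 1) :=
          mul_le_mul_of_nonneg_left
            (Real.rpow_le_rpow (hc i) hci (by linarith)) (hc i)
  have hsum : Summable fun i => c i ^ q :=
    Summable.of_nonneg_of_le (fun i => Real.rpow_nonneg (hc i) q) hle (hs.mul_right _)
  refine ⟨hsum, le_trans (Summable.tsum_le_tsum hle hsum (hs.mul_right _)) ?_⟩
  rw [tsum_mul_right, ← hT]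
  rcases eq_or_lt_of_le hT0 with h | h
  · rw [← h, Real.zero_rpow (ne_of_gt hq0)]
    rcases eq_or_lt_of_le hq with h1 | h1
    · rw [← h1]; norm_num
    · rw [Real.zero_rpow (by linarith)]; ring_nf; exact le_refl _
  · nth_rewrite 2 [show q = 1 + (q - 1) by ring]
    rw [Real.rpow_add h, Real.rpow_one]

lemma xiNorm_nonneg (p : ℝ) (X : ℕ → ℕ → ℂ) : 0 ≤ xiNorm p X :=
  Real.rpow_nonneg (tsum_nonneg fun j => Real.rpow_nonneg
    (tsum_nonneg fun k => Real.rpow_nonneg (norm_nonneg _) _) _) _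

lemma diag_lower (p : ℝ) (hp0 : 0 < p) (hp1 : p < 1) (μ : ℕ → ℂ)
    (X Y : ℕ → ℕ → ℂ) (hX : HasXiNorm p X) (hY : HasXiNorm p Y)
    (hW : ∀ j k, HasSum (fun l => X j l * Y k l) (if j = k then μ j else 0)) :
    (Summable fun j => ‖μ j‖ ^ (p / (1 - p))) ∧
      (∑' j, ‖μ j‖ ^ (p / (1 - p))) ^ ((1 - p) / p) ≤ xiNorm p X * xiNorm p Y := by
  have h1p : 0 < 1 - p := by linarith
  obtain ⟨hXs, hXS⟩ := hX
  obtain ⟨hYs, hYS⟩ := hY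
  set S : ℕ → ℝ := fun j => ∑' k, ‖X j k‖ ^ (2 * p) with hSdef
  set T : ℕ → ℝ := fun j => ∑' k, ‖Y j k‖ ^ (2 * p) with hTdef
  have hS0 : ∀ j, 0 ≤ S j :=
    fun j => tsum_nonneg fun k => Real.rpow_nonneg (norm_nonneg _) _
  have hT0 : ∀ j, 0 ≤ T j :=
    fun j => tsum_nonneg fun k => Real.rpow_nonneg (norm_nonneg _) _
  have h1p' : (1:ℝ) ≤ 1 / p := by rw [le_div_iff₀ hp0]; linarith
  have habs2 : ∀ (Z : ℕ → ℕ → ℂ) (hZ : ∀ j, Summable fun k => ‖Z j k‖ ^ (2 * p)) (j : ℕ),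
      Summable (fun l => ‖Z j l‖ ^ 2) ∧
        ∑' l, ‖Z j l‖ ^ 2 ≤ (∑' k, ‖Z j k‖ ^ (2 * p)) ^ ((1:ℝ) / p) := by
    intro Z hZ j
    have h := tsum_rpow_le (c := fun l => ‖Z j l‖ ^ (2 * p))
      (fun l => Real.rpow_nonneg (norm_nonneg _) _) (hZ j) h1p'
    have he : ∀ l, (‖Z j l‖ ^ (2 * p)) ^ ((1:ℝ) / p) = ‖Z j l‖ ^ 2 := by
      intro l
      rw [← Real.rpow_mul (norm_nonneg _), show 2 * p * (1 / p) = (2:ℝ) by field_simp,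
        Real.rpow_two]
    constructor
    · refine h.1.congr fun l => he l
    · calc ∑' l, ‖Z j l‖ ^ 2 = ∑' l, (‖Z j l‖ ^ (2 * p)) ^ ((1:ℝ) / p) := by
            exact tsum_congr fun l => (he l).symm
        _ ≤ _ := h.2
  -- pointwise bound on |μ j|
  have hmu : ∀ j, ‖μ j‖ ≤ S j ^ (1 / (2 * p)) * T j ^ (1 / (2 * p)) := by
    intro j
    have hXj := habs2 X hXs j
    have hYj := habs2 Y hYs j
    have hcs := tsum_cs (A := fun l => ‖X j l‖) (B := fun l => ‖Y j l‖)
      (fun l => norm_nonneg _) (fun l => norm_nonneg _) hXj.1 hYj.1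
    have hsum := hW j j
    rw [if_pos rfl] at hsum
    have hnorm : ‖μ j‖ ≤ ∑' l, ‖X j l‖ * ‖Y j l‖ := by
      have hs' : Summable fun l => ‖X j l * Y j l‖ := by
        simpa only [norm_mul] using hcs.1
      have h := norm_tsum_le_tsum_norm hs'
      rw [hsum.tsum_eq] at h
      simpa only [norm_mul] using h
    refine le_trans hnorm (le_trans hcs.2 ?_)
    have hsx : Real.sqrt (∑' l, ‖X j l‖ ^ 2) ≤ S j ^ (1 / (2 * p)) := by
      refine le_trans (Real.sqrt_le_sqrt hXj.2) ?_
      rw [Real.sqrt_eq_rpow, ← Real.rpow_mul (hS0 j)]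
      apply le_of_eq; congr 1; field_simp
    have hsy : Real.sqrt (∑' l, ‖Y j l‖ ^ 2) ≤ T j ^ (1 / (2 * p)) := by
      refine le_trans (Real.sqrt_le_sqrt hYj.2) ?_
      rw [Real.sqrt_eq_rpow, ← Real.rpow_mul (hT0 j)]
      apply le_of_eq; congr 1; field_simp
    exact mul_le_mul hsx hsy (Real.sqrt_nonneg _) (Real.rpow_nonneg (hS0 j) _)
  -- raise to power q
  set A : ℕ → ℝ := fun j => Real.sqrt (S j ^ (1 / (1 - p))) with hAdef
  set B : ℕ → ℝ := fun j => Real.sqrt (T j ^ (1 / (1 - p))) with hBdef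
  have hA0 : ∀ j, 0 ≤ A j := fun j => Real.sqrt_nonneg _
  have hB0 : ∀ j, 0 ≤ B j := fun j => Real.sqrt_nonneg _
  have hA2 : (fun j => A j ^ 2) = fun j => S j ^ (1 / (1 - p)) := by
    funext j; exact Real.sq_sqrt (Real.rpow_nonneg (hS0 j) _)
  have hB2 : (fun j => B j ^ 2) = fun j => T j ^ (1 / (1 - p)) := by
    funext j; exact Real.sq_sqrt (Real.rpow_nonneg (hT0 j) _)
  have hq0 : 0 < p / (1 - p) := div_pos hp0 h1p
  have hAB : ∀ j, ‖μ j‖ ^ (p / (1 - p)) ≤ A j * B j := by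
    intro j
    have h1 : ‖μ j‖ ^ (p / (1 - p)) ≤
        (S j ^ (1 / (2 * p)) * T j ^ (1 / (2 * p))) ^ (p / (1 - p)) :=
      Real.rpow_le_rpow (norm_nonneg _) (hmu j) (le_of_lt hq0)
    rw [Real.mul_rpow (Real.rpow_nonneg (hS0 j) _) (Real.rpow_nonneg (hT0 j) _),
      ← Real.rpow_mul (hS0 j), ← Real.rpow_mul (hT0 j)] at h1
    have hAj : A j = S j ^ (1 / (2 * p) * (p / (1 - p))) := by
      rw [show A j = Real.sqrt (S j ^ (1 / (1 - p))) from rfl,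
        Real.sqrt_eq_rpow, ← Real.rpow_mul (hS0 j)]
      congr 1; field_simp
    have hBj : B j = T j ^ (1 / (2 * p) * (p / (1 - p))) := by
      rw [show B j = Real.sqrt (T j ^ (1 / (1 - p))) from rfl,
        Real.sqrt_eq_rpow, ← Real.rpow_mul (hT0 j)]
      congr 1; field_simp
    rw [hAj, hBj]; exact h1
  have hA2s : Summable fun j => A j ^ 2 := by rw [hA2]; exact hXS
  have hB2s : Summable fun j => B j ^ 2 := by rw [hB2]; exact hYS
  have hcs2 := tsum_cs hA0 hB0 hA2s hB2s
  have hmusum : Summable fun j => ‖μ j‖ ^ (p / (1 - p)) :=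
    Summable.of_nonneg_of_le (fun j => Real.rpow_nonneg (norm_nonneg _) _) hAB hcs2.1
  refine ⟨hmusum, ?_⟩
  have hfinal : ∑' j, ‖μ j‖ ^ (p / (1 - p)) ≤
      (xiNorm p X * xiNorm p Y) ^ (p / (1 - p)) := by
    have h1 : ∑' j, ‖μ j‖ ^ (p / (1 - p)) ≤ ∑' j, A j * B j :=
      Summable.tsum_le_tsum hAB hmusum hcs2.1
    have h2 := hcs2.2
    rw [hA2, hB2] at h2
    have hX' : Real.sqrt (∑' j, S j ^ (1 / (1 - p))) = xiNorm p X ^ (p / (1 - p)) := by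
      rw [xiNorm, Real.sqrt_eq_rpow, ← Real.rpow_mul (tsum_nonneg fun j => Real.rpow_nonneg (hS0 j) _)]
      congr 1; field_simp
    have hY' : Real.sqrt (∑' j, T j ^ (1 / (1 - p))) = xiNorm p Y ^ (p / (1 - p)) := by
      rw [xiNorm, Real.sqrt_eq_rpow, ← Real.rpow_mul (tsum_nonneg fun j => Real.rpow_nonneg (hT0 j) _)]
      congr 1; field_simp
    rw [hX', hY', ← Real.mul_rpow (xiNorm_nonneg p X) (xiNorm_nonneg p Y)] at h2
    exact le_trans h1 h2
  have := Real.rpow_le_rpow (tsum_nonneg fun j => Real.rpow_nonneg (norm_nonneg _) _)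
    hfinal (le_of_lt (div_pos h1p hp0))
  rwa [← Real.rpow_mul (mul_nonneg (xiNorm_nonneg p X) (xiNorm_nonneg p Y)),
    show p / (1 - p) * ((1 - p) / p) = (1:ℝ) by field_simp, Real.rpow_one] at this

lemma diag_upper (p : ℝ) (hp0 : 0 < p) (hp1 : p < 1) (μ : ℕ → ℂ)
    (hsum : Summable fun j => ‖μ j‖ ^ (p / (1 - p))) :
    (∑' j, ‖μ j‖ ^ (p / (1 - p))) ^ ((1 - p) / p) ∈
      wReprVals p (fun j k : ℕ => if j = k then μ j else 0) := by
  have h1p : 0 < 1 - p := by linarith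
  set ν : ℕ → ℝ := fun j => Real.sqrt (‖μ j‖) with hν
  set X : ℕ → ℕ → ℂ := fun j k => if j = k then (ν j : ℂ) else 0 with hXdef
  set Y : ℕ → ℕ → ℂ := fun j k =>
    if j = k then (if μ j = 0 then 0 else μ j / (ν j : ℂ)) else 0 with hYdef
  have habsX : ∀ j k, ‖X j k‖ = if j = k then ν j else 0 := by
    intro j k
    by_cases h : j = k <;> simp [hXdef, h, hν, Real.sqrt_nonneg, Complex.norm_real, abs_of_nonneg (Real.sqrt_nonneg _)]
  have hν2 : ∀ j, ν j * ν j = ‖μ j‖ := fun j => Real.mul_self_sqrt (norm_nonneg _)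
  have habsY : ∀ j k, ‖Y j k‖ = if j = k then ν j else 0 := by
    intro j k
    by_cases h : j = k
    · subst h
      rw [if_pos rfl, show Y j j = (if μ j = 0 then 0 else μ j / (ν j : ℂ)) from by
        simp [hYdef]]
      by_cases h0 : μ j = 0
      · simp [h0, hν]
      · have hνj : ν j ≠ 0 := by
          intro hc
          have h2 : ‖μ j‖ = 0 := by rw [← hν2 j, hc, mul_zero]
          exact h0 (by simpa using h2)
        rw [if_neg h0, norm_div, Complex.norm_real, Real.norm_eq_abs,
          abs_of_nonneg (show (0:ℝ) ≤ ν j from Real.sqrt_nonneg _),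
          div_eq_iff hνj]
        exact (hν2 j).symm
    · simp [hYdef, h]
  -- inner sums
  have hrpow_if : ∀ (j k : ℕ), (if j = k then ν j else 0) ^ (2 * p) =
      if k = j then ‖μ j‖ ^ p else 0 := by
    intro j k
    by_cases h : j = k
    · rw [if_pos h, if_pos h.symm,
        show ν j = ‖μ j‖ ^ ((1:ℝ)/2) from Real.sqrt_eq_rpow _,
        ← Real.rpow_mul (norm_nonneg _)]
      congr 1; ring
    · rw [if_neg h, if_neg (Ne.symm h), Real.zero_rpow (by positivity)]
  have hinner : ∀ (Z : ℕ → ℕ → ℂ) (habs : ∀ j k, ‖Z j k‖ = if j = k then ν j else 0),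
      (∀ j, Summable fun k => ‖Z j k‖ ^ (2 * p)) ∧
        ∀ j, (∑' k, ‖Z j k‖ ^ (2 * p)) = ‖μ j‖ ^ p := by
    intro Z habs
    have hfun : ∀ j, (fun k => ‖Z j k‖ ^ (2 * p)) =
        fun k => if k = j then ‖μ j‖ ^ p else 0 := by
      intro j; funext k; rw [habs j k, hrpow_if j k]
    constructor
    · intro j; rw [hfun j]; exact (hasSum_ite_eq j _).summable
    · intro j; rw [hfun j]; exact tsum_ite_eq j _
  have houter : ∀ j, (‖μ j‖ ^ p) ^ ((1:ℝ) / (1 - p)) =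
      ‖μ j‖ ^ (p / (1 - p)) := by
    intro j
    rw [← Real.rpow_mul (norm_nonneg _)]
    congr 1; field_simp
  have hxi : ∀ (Z : ℕ → ℕ → ℂ) (habs : ∀ j k, ‖Z j k‖ = if j = k then ν j else 0),
      HasXiNorm p Z ∧ xiNorm p Z =
        (∑' j, ‖μ j‖ ^ (p / (1 - p))) ^ ((1 - p) / (2 * p)) := by
    intro Z habs
    obtain ⟨hs, ht⟩ := hinner Z habs
    have h2 : (fun j => (∑' k, ‖Z j k‖ ^ (2 * p)) ^ (1 / (1 - p))) =
        fun j => ‖μ j‖ ^ (p / (1 - p)) := by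
      funext j; rw [ht j, houter j]
    refine ⟨⟨hs, by rw [h2]; exact hsum⟩, ?_⟩
    rw [xiNorm, h2]
  obtain ⟨hXxi, hXval⟩ := hxi X habsX
  obtain ⟨hYxi, hYval⟩ := hxi Y habsY
  refine ⟨X, Y, hXxi, hYxi, ?_, ?_⟩
  · intro j k
    have hfun : (fun l => X j l * Y k l) =
        fun l => if l = j then (ν j : ℂ) * Y k j else 0 := by
      funext l
      by_cases h : j = l
      · rw [← h]; simp [hXdef]
      · simp [hXdef, h, Ne.symm h]
    rw [hfun]
    have : (ν j : ℂ) * Y k j = if j = k then μ j else 0 := by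
      by_cases h : j = k
      · subst h
        rw [if_pos rfl, show Y j j = (if μ j = 0 then 0 else μ j / (ν j : ℂ)) from by
          simp [hYdef]]
        by_cases h0 : μ j = 0
        · simp [h0]
        · have hνj : (ν j : ℂ) ≠ 0 := by
            simp only [ne_eq, Complex.ofReal_eq_zero]
            intro hc
            have h2 : ‖μ j‖ = 0 := by rw [← hν2 j, hc, mul_zero]
            exact h0 (by simpa using h2)
          rw [if_neg h0, mul_comm, div_mul_cancel₀ _ hνj]
      · rw [if_neg h, show Y k j = 0 from by simp [hYdef, Ne.symm h], mul_zero]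
    rw [this]
    exact hasSum_ite_eq j _
  · have hU0 : (0:ℝ) ≤ ∑' j, ‖μ j‖ ^ (p / (1 - p)) :=
      tsum_nonneg fun j => Real.rpow_nonneg (norm_nonneg _) _
    have hpne : p ≠ 0 := ne_of_gt hp0
    have hexp : (1 - p) / (2 * p) + (1 - p) / (2 * p) ≠ 0 := by
      apply ne_of_gt
      have := div_pos h1p (by linarith : (0:ℝ) < 2 * p)
      linarith
    rw [hXval, hYval, ← Real.rpow_add' hU0 hexp]
    congr 1
    field_simp
    ring

/-- Theorem 6.4: for `0 < p < 1`, a diagonal matrix `W = diag(μ)` belongs to `𝒲_p` iff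
`∑_j |μ_j|^{p/(1-p)} < ∞`, in which case
`‖W‖_{𝒲_p} = (∑_j |μ_j|^{p/(1-p)})^{(1-p)/p}`. -/
theorem stmt13 (p : ℝ) (hp0 : 0 < p) (hp1 : p < 1) (μ : ℕ → ℂ) :
    ((wReprVals p fun j k : ℕ => if j = k then μ j else 0).Nonempty ↔
      Summable fun j => ‖μ j‖ ^ (p / (1 - p))) ∧
    ((Summable fun j => ‖μ j‖ ^ (p / (1 - p))) →
      sInf (wReprVals p fun j k : ℕ => if j = k then μ j else 0) =
        (∑' j, ‖μ j‖ ^ (p / (1 - p))) ^ ((1 - p) / p)) := by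
  set t := (∑' j, ‖μ j‖ ^ (p / (1 - p))) ^ ((1 - p) / p) with ht
  constructor
  · constructor
    · rintro ⟨c, X, Y, hX, hY, hW, rfl⟩
      exact (diag_lower p hp0 hp1 μ X Y hX hY hW).1
    · intro hsum
      exact ⟨t, diag_upper p hp0 hp1 μ hsum⟩
  · intro hsum
    have hmem := diag_upper p hp0 hp1 μ hsum
    have hlb : ∀ c ∈ wReprVals p (fun j k : ℕ => if j = k then μ j else 0), t ≤ c := by
      rintro c ⟨X, Y, hX, hY, hW, rfl⟩
      exact (diag_lower p hp0 hp1 μ X Y hX hY hW).2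
    exact le_antisymm (csInf_le ⟨t, hlb⟩ hmem) (le_csInf ⟨t, hmem⟩ hlb)
end

section
/- Let 0 < p < 1 and let W = {w_{jk}}_{j,k≥0} be a matrix in 𝒲_p. Then there exist sequences α = {α_j}_{j≥0} and β = {β_k}_{k≥0} of nonnegative real numbers with ∑_j α_j^{2p/(1−p)} < ∞ and ∑_k β_k^{2p/(1−p)} < ∞ such that |w_{jk}| ≤ α_j β_k for all j,k ≥ 0 and (∑_j α_j^{2p/(1−p)})^{(1−p)/(2p)} · (∑_k β_k^{2p/(1−p)})^{(1−p)/(2p)} = ‖W‖_{𝒲_p}. -/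
open scoped BigOperators

/-- power-sum inequality: for `1 ≤ q` and nonneg summable `f`,
`f^q` is summable with `∑ f^q ≤ (∑ f)^q`. -/
lemma aux_summable_rpow {f : ℕ → ℝ} (hf0 : ∀ i, 0 ≤ f i) (hf : Summable f)
    {q : ℝ} (hq : 1 ≤ q) :
    Summable (fun i => f i ^ q) ∧ (∑' i, f i ^ q) ≤ (∑' i, f i) ^ q := by
  set S := ∑' i, f i with hS
  have hS0 : 0 ≤ S := tsum_nonneg hf0
  have key : ∀ i, f i ^ q ≤ f i * S ^ (q - 1) := by
    intro i
    have h1 : f i ^ q = f i ^ (1 : ℝ) * f i ^ (q - 1) := by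
      rw [← Real.rpow_add_of_nonneg (hf0 i) zero_le_one (by linarith)]
      norm_num
    rw [h1, Real.rpow_one]
    exact mul_le_mul_of_nonneg_left
      (Real.rpow_le_rpow (hf0 i) (hf.le_tsum i fun j _ => hf0 j) (by linarith)) (hf0 i)
  have hsum : Summable (fun i => f i * S ^ (q - 1)) := hf.mul_right _
  have hsummable : Summable (fun i => f i ^ q) :=
    Summable.of_nonneg_of_le (fun i => Real.rpow_nonneg (hf0 i) q) key hsum
  refine ⟨hsummable, ?_⟩
  calc (∑' i, f i ^ q) ≤ ∑' i, f i * S ^ (q - 1) := Summable.tsum_le_tsum key hsummable hsum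
    _ = S * S ^ (q - 1) := tsum_mul_right
    _ = S ^ (1:ℝ) * S ^ (q - 1) := by rw [Real.rpow_one]
    _ = S ^ q := by
        rw [← Real.rpow_add_of_nonneg hS0 zero_le_one (by linarith)]; norm_num

/-- Dominance: if `x, y ∈ ℓ^{2p}` and `∑ x l * y l = w`, then
`|w| ≤ ‖x‖_{2p} ‖y‖_{2p}`. -/
lemma aux_dom {p : ℝ} (hp0 : 0 < p) (hp1 : p < 1) {x y : ℕ → ℂ} {w : ℂ}
    (hx : Summable fun l => ‖x l‖ ^ (2 * p))
    (hy : Summable fun l => ‖y l‖ ^ (2 * p))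
    (hs : HasSum (fun l => x l * y l) w) :
    ‖w‖ ≤ (∑' l, ‖x l‖ ^ (2 * p)) ^ (1 / (2 * p)) *
      (∑' l, ‖y l‖ ^ (2 * p)) ^ (1 / (2 * p)) := by
  have hp : p ≠ 0 := hp0.ne'
  have hq : (1:ℝ) ≤ 1 / p := by rw [le_div_iff₀ hp0]; linarith
  have habs : ∀ z : ℂ, (0:ℝ) ≤ ‖z‖ := fun z => norm_nonneg z
  have hconv : ∀ z : ℂ, (‖z‖ ^ (2 * p)) ^ (1 / p) = ‖z‖ ^ (2:ℝ) := by
    intro z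
    rw [← Real.rpow_mul (habs z)]
    congr 1
    field_simp
  obtain ⟨hsx, htx⟩ := aux_summable_rpow (fun l => Real.rpow_nonneg (habs (x l)) _) hx hq
  obtain ⟨hsy, hty⟩ := aux_summable_rpow (fun l => Real.rpow_nonneg (habs (y l)) _) hy hq
  simp only [hconv] at hsx htx hsy hty
  have hpq : (2:ℝ).HolderConjugate 2 := ⟨by norm_num, by norm_num, by norm_num⟩
  obtain ⟨hsab, hab⟩ := Real.summable_and_inner_le_Lp_mul_Lq_tsum_of_nonneg hpq
    (fun l => habs (x l)) (fun l => habs (y l)) hsx hsy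
  have hW : ‖w‖ ≤ ∑' l, ‖x l‖ * ‖y l‖ := by
    rw [← hs.tsum_eq]
    calc ‖∑' l, x l * y l‖ ≤ ∑' l, ‖x l * y l‖ :=
          norm_tsum_le_tsum_norm (by simpa [norm_mul] using hsab)
      _ = ∑' l, ‖x l‖ * ‖y l‖ := by
          simp [norm_mul]
  have key : ∀ S T : ℝ, 0 ≤ S → 0 ≤ T → T ≤ S ^ (1/p) →
      T ^ ((1:ℝ)/2) ≤ S ^ (1/(2*p)) := by
    intro S T hS hT hTS
    calc T ^ ((1:ℝ)/2) ≤ (S ^ (1/p)) ^ ((1:ℝ)/2) :=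
          Real.rpow_le_rpow hT hTS (by norm_num)
      _ = S ^ (1/(2*p)) := by
          rw [← Real.rpow_mul hS]; congr 1; field_simp
  have hSx0 : (0:ℝ) ≤ ∑' l, ‖x l‖ ^ (2 * p) :=
    tsum_nonneg fun l => Real.rpow_nonneg (habs _) _
  have hSy0 : (0:ℝ) ≤ ∑' l, ‖y l‖ ^ (2 * p) :=
    tsum_nonneg fun l => Real.rpow_nonneg (habs _) _
  have hTx0 : (0:ℝ) ≤ ∑' l, ‖x l‖ ^ (2:ℝ) :=
    tsum_nonneg fun l => Real.rpow_nonneg (habs _) _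
  have hTy0 : (0:ℝ) ≤ ∑' l, ‖y l‖ ^ (2:ℝ) :=
    tsum_nonneg fun l => Real.rpow_nonneg (habs _) _
  calc ‖w‖ ≤ ∑' l, ‖x l‖ * ‖y l‖ := hW
    _ ≤ (∑' l, ‖x l‖ ^ (2:ℝ)) ^ ((1:ℝ)/2) *
        (∑' l, ‖y l‖ ^ (2:ℝ)) ^ ((1:ℝ)/2) := hab
    _ ≤ _ := mul_le_mul (key _ _ hSx0 hTx0 htx) (key _ _ hSy0 hTy0 hty)
        (Real.rpow_nonneg hTy0 _) (Real.rpow_nonneg hSx0 _)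

lemma aux_step {p : ℝ} (hp0 : 0 < p) (hp1 : p < 1) (W : ℕ → ℕ → ℂ) {c : ℝ}
    (hc : c ∈ wReprVals p W) :
    ∃ α β : ℕ → ℝ, (∀ j, 0 ≤ α j) ∧ (∀ k, 0 ≤ β k) ∧
      (Summable fun j => α j ^ (2 * p / (1 - p))) ∧
      (Summable fun k => β k ^ (2 * p / (1 - p))) ∧
      (∀ j k, ‖W j k‖ ≤ α j * β k) ∧
      (∑' j, α j ^ (2 * p / (1 - p))) ^ ((1 - p) / (2 * p)) *
        (∑' k, β k ^ (2 * p / (1 - p))) ^ ((1 - p) / (2 * p)) = c := by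
  obtain ⟨X, Y, hX, hY, hSum, rfl⟩ := hc
  have h1p : (0:ℝ) < 1 - p := by linarith
  have habs : ∀ z : ℂ, (0:ℝ) ≤ ‖z‖ := fun z => norm_nonneg z
  have hnn : ∀ (Z : ℕ → ℕ → ℂ) j, (0:ℝ) ≤ ∑' l, ‖Z j l‖ ^ (2 * p) :=
    fun Z j => tsum_nonneg fun l => Real.rpow_nonneg (habs _) _
  have hid : ∀ S : ℝ, 0 ≤ S → (S ^ (1/(2*p))) ^ (2 * p / (1 - p)) = S ^ (1/(1-p)) := by
    intro S hS
    rw [← Real.rpow_mul hS]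
    congr 1
    field_simp
  refine ⟨fun j => (∑' l, ‖X j l‖ ^ (2*p)) ^ (1/(2*p)),
          fun k => (∑' l, ‖Y k l‖ ^ (2*p)) ^ (1/(2*p)),
          fun j => Real.rpow_nonneg (hnn X j) _,
          fun k => Real.rpow_nonneg (hnn Y k) _, ?_, ?_, ?_, ?_⟩
  · have : (fun j => ((∑' l, ‖X j l‖ ^ (2*p)) ^ (1/(2*p))) ^ (2 * p / (1 - p)))
        = fun j => (∑' l, ‖X j l‖ ^ (2*p)) ^ (1/(1-p)) :=
      funext fun j => hid _ (hnn X j)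
    rw [this]; exact hX.2
  · have : (fun k => ((∑' l, ‖Y k l‖ ^ (2*p)) ^ (1/(2*p))) ^ (2 * p / (1 - p)))
        = fun k => (∑' l, ‖Y k l‖ ^ (2*p)) ^ (1/(1-p)) :=
      funext fun k => hid _ (hnn Y k)
    rw [this]; exact hY.2
  · exact fun j k => aux_dom hp0 hp1 (hX.1 j) (hY.1 k) (hSum j k)
  · rw [tsum_congr (fun j => hid _ (hnn X j)), tsum_congr (fun k => hid _ (hnn Y k))]
    rfl

/-- Normalized step: both factors have norm `√c`. -/
lemma aux_stepN {p : ℝ} (hp0 : 0 < p) (hp1 : p < 1) (W : ℕ → ℕ → ℂ)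
    {j₀ k₀ : ℕ} (hjk : W j₀ k₀ ≠ 0) {c : ℝ} (hc : c ∈ wReprVals p W) :
    ∃ α β : ℕ → ℝ, (∀ j, 0 ≤ α j) ∧ (∀ k, 0 ≤ β k) ∧
      (Summable fun j => α j ^ (2 * p / (1 - p))) ∧
      (Summable fun k => β k ^ (2 * p / (1 - p))) ∧
      (∀ j k, ‖W j k‖ ≤ α j * β k) ∧
      (∑' j, α j ^ (2 * p / (1 - p))) = Real.sqrt c ^ (2 * p / (1 - p)) ∧
      (∑' k, β k ^ (2 * p / (1 - p))) = Real.sqrt c ^ (2 * p / (1 - p)) := by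
  obtain ⟨α, β, hα0, hβ0, hαs, hβs, hdom, heq⟩ := aux_step hp0 hp1 W hc
  have h1p : (0:ℝ) < 1 - p := by linarith
  set e := 2 * p / (1 - p) with he_def
  set e' := (1 - p) / (2 * p) with he'_def
  have he : 0 < e := by positivity
  have he' : 0 < e' := by positivity
  have hee' : e * e' = 1 := by
    rw [he_def, he'_def]; field_simp
  have hxe : ∀ x : ℝ, 0 ≤ x → (x ^ e) ^ e' = x := by
    intro x hx; rw [← Real.rpow_mul hx, hee', Real.rpow_one]
  have hxe' : ∀ x : ℝ, 0 ≤ x → (x ^ e') ^ e = x := by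
    intro x hx; rw [← Real.rpow_mul hx, mul_comm e' e, hee', Real.rpow_one]
  -- positivity of α j₀, β k₀
  have hWpos : 0 < ‖W j₀ k₀‖ := norm_pos_iff.2 hjk
  have hprod : 0 < α j₀ * β k₀ := lt_of_lt_of_le hWpos (hdom j₀ k₀)
  have hαj : 0 < α j₀ := by
    rcases (hα0 j₀).lt_or_eq with h | h
    · exact h
    · exfalso; rw [← h, zero_mul] at hprod; exact lt_irrefl _ hprod
  have hβk : 0 < β k₀ := by
    rcases (hβ0 k₀).lt_or_eq with h | h
    · exact h
    · exfalso; rw [← h, mul_zero] at hprod; exact lt_irrefl _ hprod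
  set Sα := ∑' j, α j ^ e with hSα_def
  set Sβ := ∑' k, β k ^ e with hSβ_def
  have hSα_pos : 0 < Sα :=
    lt_of_lt_of_le (Real.rpow_pos_of_pos hαj e)
      (Summable.le_tsum hαs j₀ fun j _ => Real.rpow_nonneg (hα0 j) e)
  have hSβ_pos : 0 < Sβ :=
    lt_of_lt_of_le (Real.rpow_pos_of_pos hβk e)
      (Summable.le_tsum hβs k₀ fun k _ => Real.rpow_nonneg (hβ0 k) e)
  set A := Sα ^ e' with hA_def
  set B := Sβ ^ e' with hB_def
  have hA : 0 < A := Real.rpow_pos_of_pos hSα_pos e'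
  have hB : 0 < B := Real.rpow_pos_of_pos hSβ_pos e'
  have hABc : A * B = c := heq
  set tα := Real.sqrt (B / A) with htα_def
  set tβ := Real.sqrt (A / B) with htβ_def
  have htα : 0 < tα := Real.sqrt_pos.2 (by positivity)
  have htβ : 0 < tβ := Real.sqrt_pos.2 (by positivity)
  have htt : tα * tβ = 1 := by
    rw [htα_def, htβ_def, ← Real.sqrt_mul (by positivity)]
    rw [div_mul_div_comm, mul_comm B A, div_self (by positivity), Real.sqrt_one]
  have hnormα : tα * A = Real.sqrt c := by
    rw [← hABc, htα_def, ← Real.sqrt_sq hA.le, ← Real.sqrt_mul (by positivity)]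
    congr 1
    field_simp
    rw [Real.sq_sqrt (by positivity)]
  have hnormβ : tβ * B = Real.sqrt c := by
    rw [← hABc, htβ_def, ← Real.sqrt_sq hB.le, ← Real.sqrt_mul (by positivity)]
    congr 1
    field_simp
    rw [Real.sq_sqrt (by positivity)]
  refine ⟨fun j => tα * α j, fun k => tβ * β k,
      fun j => mul_nonneg htα.le (hα0 j), fun k => mul_nonneg htβ.le (hβ0 k), ?_, ?_, ?_, ?_, ?_⟩
  · have : (fun j => (tα * α j) ^ e) = fun j => tα ^ e * α j ^ e :=
      funext fun j => Real.mul_rpow htα.le (hα0 j)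
    rw [this]; exact hαs.mul_left _
  · have : (fun k => (tβ * β k) ^ e) = fun k => tβ ^ e * β k ^ e :=
      funext fun k => Real.mul_rpow htβ.le (hβ0 k)
    rw [this]; exact hβs.mul_left _
  · intro j k
    calc ‖W j k‖ ≤ α j * β k := hdom j k
      _ = (tα * tβ) * (α j * β k) := by rw [htt, one_mul]
      _ = tα * α j * (tβ * β k) := by ring
  · have h1 : (fun j => (tα * α j) ^ e) = fun j => tα ^ e * α j ^ e :=
      funext fun j => Real.mul_rpow htα.le (hα0 j)
    rw [h1, tsum_mul_left, ← hSα_def, ← hnormα, Real.mul_rpow htα.le hA.le, hA_def,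
      hxe' _ hSα_pos.le]
  · have h1 : (fun k => (tβ * β k) ^ e) = fun k => tβ ^ e * β k ^ e :=
      funext fun k => Real.mul_rpow htβ.le (hβ0 k)
    rw [h1, tsum_mul_left, ← hSβ_def, ← hnormβ, Real.mul_rpow htβ.le hB.le, hB_def,
      hxe' _ hSβ_pos.le]

open Filter Topology

/-- Theorem 6.5: for `0 < p < 1` and `W ∈ 𝒲_p` there are nonnegative sequences
`α, β ∈ ℓ^{2p/(1-p)}` with `|w_{jk}| ≤ α_j β_k` and
`‖α‖_{ℓ^{2p♯}} ‖β‖_{ℓ^{2p♯}} = ‖W‖_{𝒲_p}`. -/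
theorem stmt14 (p : ℝ) (hp0 : 0 < p) (hp1 : p < 1)
    (W : ℕ → ℕ → ℂ) (hW : (wReprVals p W).Nonempty) :
    ∃ α β : ℕ → ℝ, (∀ j, 0 ≤ α j) ∧ (∀ k, 0 ≤ β k) ∧
      (Summable fun j => α j ^ (2 * p / (1 - p))) ∧
      (Summable fun k => β k ^ (2 * p / (1 - p))) ∧
      (∀ j k, ‖W j k‖ ≤ α j * β k) ∧
      (∑' j, α j ^ (2 * p / (1 - p))) ^ ((1 - p) / (2 * p)) *
          (∑' k, β k ^ (2 * p / (1 - p))) ^ ((1 - p) / (2 * p)) =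
        sInf (wReprVals p W) := by
  have h1p : (0:ℝ) < 1 - p := by linarith
  set e := 2 * p / (1 - p) with he_def
  set e' := (1 - p) / (2 * p) with he'_def
  have he : 0 < e := by rw [he_def]; exact div_pos (by linarith) h1p
  have he' : 0 < e' := by rw [he'_def]; exact div_pos h1p (by linarith)
  have hee' : e * e' = 1 := by rw [he_def, he'_def]; field_simp
  have hxe : ∀ x : ℝ, 0 ≤ x → (x ^ e) ^ e' = x := fun x hx => by
    rw [← Real.rpow_mul hx, hee', Real.rpow_one]
  have hposS : ∀ c ∈ wReprVals p W, (0:ℝ) ≤ c := by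
    rintro c ⟨X, Y, -, -, -, rfl⟩
    have hnn : ∀ Z : ℕ → ℕ → ℂ, 0 ≤ xiNorm p Z := fun Z =>
      Real.rpow_nonneg (tsum_nonneg fun j => Real.rpow_nonneg
        (tsum_nonneg fun k => Real.rpow_nonneg (norm_nonneg _) _) _) _
    exact mul_nonneg (hnn X) (hnn Y)
  have hbdd : BddBelow (wReprVals p W) := ⟨0, hposS⟩
  set c₀ := sInf (wReprVals p W) with hc₀_def
  have hc₀0 : 0 ≤ c₀ := le_csInf hW hposS
  by_cases hW0 : ∀ j k, W j k = 0
  · -- W = 0 : explicit sequences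
    have hα1 : ∀ b : ℕ, b ≠ 0 → (if b = 0 then c₀ else 0) ^ e = 0 := by
      intro b hb; rw [if_neg hb, Real.zero_rpow he.ne']
    have hβ1 : ∀ b : ℕ, b ≠ 0 → ((if b = 0 then (1:ℝ) else 0)) ^ e = 0 := by
      intro b hb; rw [if_neg hb, Real.zero_rpow he.ne']
    refine ⟨fun j => if j = 0 then c₀ else 0, fun k => if k = 0 then 1 else 0,
        ?_, ?_, ?_, ?_, ?_, ?_⟩
    · intro j; dsimp only; split <;> simp [hc₀0]
    · intro k; dsimp only; split <;> norm_num
    · refine summable_of_ne_finset_zero (s := {0}) ?_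
      intro j hj
      exact hα1 j (by simpa using hj)
    · refine summable_of_ne_finset_zero (s := {0}) ?_
      intro k hk
      exact hβ1 k (by simpa using hk)
    · intro j k
      rw [hW0 j k]
      simp only [norm_zero]
      apply mul_nonneg <;> split <;> norm_num [hc₀0]
    · rw [tsum_eq_single 0 hα1, tsum_eq_single 0 hβ1]
      rw [if_pos rfl, if_pos rfl, Real.one_rpow, Real.one_rpow, mul_one, hxe _ hc₀0]
  · push_neg at hW0
    obtain ⟨j₀, k₀, hjk⟩ := hW0
    have hWpos : 0 < ‖W j₀ k₀‖ := norm_pos_iff.2 hjk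
    -- minimizing sequence
    have hseq : ∀ n : ℕ, ∃ c ∈ wReprVals p W, c < c₀ + 1/((n:ℝ)+1) := by
      intro n
      apply exists_lt_of_csInf_lt hW
      rw [← hc₀_def]
      have : (0:ℝ) < 1/((n:ℝ)+1) := by positivity
      linarith
    choose cseq hcmem hclt using hseq
    have hcge : ∀ n, c₀ ≤ cseq n := fun n => csInf_le hbdd (hcmem n)
    have hcle1 : ∀ n, cseq n ≤ c₀ + 1 := by
      intro n
      have h1 : 1/((n:ℝ)+1) ≤ 1 := by
        rw [div_le_one (by positivity)]
        simp
      linarith [hclt n]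
    have hctend : Tendsto cseq atTop (𝓝 c₀) := by
      have hup : Tendsto (fun n : ℕ => c₀ + 1/((n:ℝ)+1)) atTop (𝓝 (c₀ + 0)) :=
        tendsto_const_nhds.add tendsto_one_div_add_atTop_nhds_zero_nat
      rw [add_zero] at hup
      exact tendsto_of_tendsto_of_tendsto_of_le_of_le tendsto_const_nhds hup hcge
        fun n => (hclt n).le
    have hstep := fun n => aux_stepN hp0 hp1 W hjk (hcmem n)
    choose αn βn hαn0 hβn0 hαns hβns hdomn hαnt hβnt using hstep
    set M := Real.sqrt (c₀ + 1) with hM_def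
    have hcoordα_le : ∀ n j, αn n j ≤ M := by
      intro n j
      have h1 : αn n j ^ e ≤ Real.sqrt (cseq n) ^ e := by
        rw [← hαnt n]
        exact Summable.le_tsum (hαns n) j fun i _ => Real.rpow_nonneg (hαn0 n i) e
      have h2 : αn n j ≤ Real.sqrt (cseq n) := by
        have h3 := Real.rpow_le_rpow (Real.rpow_nonneg (hαn0 n j) e) h1 he'.le
        rwa [hxe _ (hαn0 n j), hxe _ (Real.sqrt_nonneg _)] at h3
      exact h2.trans (Real.sqrt_le_sqrt (hcle1 n))
    have hcoordβ_le : ∀ n k, βn n k ≤ M := by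
      intro n k
      have h1 : βn n k ^ e ≤ Real.sqrt (cseq n) ^ e := by
        rw [← hβnt n]
        exact Summable.le_tsum (hβns n) k fun i _ => Real.rpow_nonneg (hβn0 n i) e
      have h2 : βn n k ≤ Real.sqrt (cseq n) := by
        have h3 := Real.rpow_le_rpow (Real.rpow_nonneg (hβn0 n k) e) h1 he'.le
        rwa [hxe _ (hβn0 n k), hxe _ (Real.sqrt_nonneg _)] at h3
      exact h2.trans (Real.sqrt_le_sqrt (hcle1 n))
    -- compactness / diagonal argument
    let Z := (ℕ → Set.Icc (0:ℝ) M) × (ℕ → Set.Icc (0:ℝ) M)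
    let x : ℕ → Z := fun n =>
      (fun j => ⟨αn n j, ⟨hαn0 n j, hcoordα_le n j⟩⟩,
       fun k => ⟨βn n k, ⟨hβn0 n k, hcoordβ_le n k⟩⟩)
    obtain ⟨L, -, φ, hφmono, hφtend⟩ :=
      (isCompact_univ (X := Z)).tendsto_subseq (fun n => Set.mem_univ (x n))
    set α := fun j => ((L.1 j : ℝ)) with hα_def
    set β := fun k => ((L.2 k : ℝ)) with hβ_def
    have hα0 : ∀ j, 0 ≤ α j := fun j => (L.1 j).2.1
    have hβ0 : ∀ k, 0 ≤ β k := fun k => (L.2 k).2.1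
    have hcoordα : ∀ j, Tendsto (fun n => αn (φ n) j) atTop (𝓝 (α j)) := by
      intro j
      have hcont : Continuous fun z : Z => ((z.1 j : ℝ)) :=
        continuous_subtype_val.comp ((continuous_apply j).comp continuous_fst)
      exact (hcont.tendsto L).comp hφtend
    have hcoordβ : ∀ k, Tendsto (fun n => βn (φ n) k) atTop (𝓝 (β k)) := by
      intro k
      have hcont : Continuous fun z : Z => ((z.2 k : ℝ)) :=
        continuous_subtype_val.comp ((continuous_apply k).comp continuous_snd)
      exact (hcont.tendsto L).comp hφtend
    have hdom : ∀ j k, ‖W j k‖ ≤ α j * β k := fun j k =>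
      ge_of_tendsto' ((hcoordα j).mul (hcoordβ k)) fun n => hdomn (φ n) j k
    have hφtop : Tendsto φ atTop atTop := hφmono.tendsto_atTop
    have hc' : Tendsto (fun n => cseq (φ n)) atTop (𝓝 c₀) := hctend.comp hφtop
    have hs' : Tendsto (fun n => Real.sqrt (cseq (φ n)) ^ e) atTop (𝓝 (Real.sqrt c₀ ^ e)) :=
      Tendsto.rpow_const ((Real.continuous_sqrt.tendsto c₀).comp hc') (Or.inr he.le)
    have hboundα : ∀ s : Finset ℕ, ∑ j ∈ s, α j ^ e ≤ Real.sqrt c₀ ^ e := by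
      intro s
      have h1 : Tendsto (fun n => ∑ j ∈ s, (αn (φ n) j) ^ e) atTop
          (𝓝 (∑ j ∈ s, α j ^ e)) :=
        tendsto_finset_sum s fun j _ => (hcoordα j).rpow_const (Or.inr he.le)
      refine le_of_tendsto_of_tendsto' h1 hs' fun n => ?_
      calc ∑ j ∈ s, αn (φ n) j ^ e ≤ ∑' j, αn (φ n) j ^ e :=
            Summable.sum_le_tsum s (fun j _ => Real.rpow_nonneg (hαn0 (φ n) j) e) (hαns (φ n))
        _ = Real.sqrt (cseq (φ n)) ^ e := hαnt (φ n)
    have hboundβ : ∀ s : Finset ℕ, ∑ k ∈ s, β k ^ e ≤ Real.sqrt c₀ ^ e := by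
      intro s
      have h1 : Tendsto (fun n => ∑ k ∈ s, (βn (φ n) k) ^ e) atTop
          (𝓝 (∑ k ∈ s, β k ^ e)) :=
        tendsto_finset_sum s fun k _ => (hcoordβ k).rpow_const (Or.inr he.le)
      refine le_of_tendsto_of_tendsto' h1 hs' fun n => ?_
      calc ∑ k ∈ s, βn (φ n) k ^ e ≤ ∑' k, βn (φ n) k ^ e :=
            Summable.sum_le_tsum s (fun k _ => Real.rpow_nonneg (hβn0 (φ n) k) e) (hβns (φ n))
        _ = Real.sqrt (cseq (φ n)) ^ e := hβnt (φ n)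
    have hαsum : Summable fun j => α j ^ e :=
      summable_of_sum_le (fun j => Real.rpow_nonneg (hα0 j) e) hboundα
    have hβsum : Summable fun k => β k ^ e :=
      summable_of_sum_le (fun k => Real.rpow_nonneg (hβ0 k) e) hboundβ
    have hαtle : ∑' j, α j ^ e ≤ Real.sqrt c₀ ^ e := Summable.tsum_le_of_sum_le hαsum hboundα
    have hβtle : ∑' k, β k ^ e ≤ Real.sqrt c₀ ^ e := Summable.tsum_le_of_sum_le hβsum hboundβ
    rcases hc₀0.eq_or_lt with h0 | hc₀pos
    · -- c₀ = 0
      refine ⟨α, β, hα0, hβ0, hαsum, hβsum, hdom, ?_⟩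
      have hz : ∑' j, α j ^ e = 0 := by
        refine le_antisymm ?_ (tsum_nonneg fun j => Real.rpow_nonneg (hα0 j) e)
        have : Real.sqrt c₀ ^ e = 0 := by
          rw [← h0, Real.sqrt_zero, Real.zero_rpow he.ne']
        rw [← this]; exact hαtle
      rw [hz, Real.zero_rpow he'.ne', zero_mul, ← h0]
    · -- 0 < c₀
      have hprod : 0 < α j₀ * β k₀ := lt_of_lt_of_le hWpos (hdom j₀ k₀)
      have hαj : 0 < α j₀ := by
        rcases (hα0 j₀).lt_or_eq with h | h
        · exact h
        · exfalso; rw [← h, zero_mul] at hprod; exact lt_irrefl _ hprod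
      have hSα_pos : 0 < ∑' j, α j ^ e :=
        lt_of_lt_of_le (Real.rpow_pos_of_pos hαj e)
          (Summable.le_tsum hαsum j₀ fun i _ => Real.rpow_nonneg (hα0 i) e)
      have hβk : 0 < β k₀ := by
        rcases (hβ0 k₀).lt_or_eq with h | h
        · exact h
        · exfalso; rw [← h, mul_zero] at hprod; exact lt_irrefl _ hprod
      have hSβ_pos : 0 < ∑' k, β k ^ e :=
        lt_of_lt_of_le (Real.rpow_pos_of_pos hβk e)
          (Summable.le_tsum hβsum k₀ fun i _ => Real.rpow_nonneg (hβ0 i) e)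
      have hA : 0 < (∑' j, α j ^ e) ^ e' := Real.rpow_pos_of_pos hSα_pos e'
      have hB : 0 < (∑' k, β k ^ e) ^ e' := Real.rpow_pos_of_pos hSβ_pos e'
      have hAle : (∑' j, α j ^ e) ^ e' ≤ Real.sqrt c₀ := by
        have h3 := Real.rpow_le_rpow (tsum_nonneg fun j => Real.rpow_nonneg (hα0 j) e)
          hαtle he'.le
        rwa [hxe _ (Real.sqrt_nonneg _)] at h3
      have hBle : (∑' k, β k ^ e) ^ e' ≤ Real.sqrt c₀ := by
        have h3 := Real.rpow_le_rpow (tsum_nonneg fun k => Real.rpow_nonneg (hβ0 k) e)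
          hβtle he'.le
        rwa [hxe _ (Real.sqrt_nonneg _)] at h3
      set AB := (∑' j, α j ^ e) ^ e' * (∑' k, β k ^ e) ^ e' with hAB_def
      have hABpos : 0 < AB := mul_pos hA hB
      have hABle : AB ≤ c₀ := by
        calc AB ≤ Real.sqrt c₀ * Real.sqrt c₀ :=
              mul_le_mul hAle hBle hB.le (Real.sqrt_nonneg _)
          _ = c₀ := Real.mul_self_sqrt hc₀0
      set t := c₀ / AB with ht_def
      have ht0 : 0 < t := div_pos hc₀pos hABpos
      have ht1 : 1 ≤ t := (one_le_div hABpos).2 hABle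
      refine ⟨fun j => t * α j, β, fun j => mul_nonneg ht0.le (hα0 j), hβ0, ?_, hβsum, ?_, ?_⟩
      · have h1 : (fun j => (t * α j) ^ e) = fun j => t ^ e * α j ^ e :=
          funext fun j => Real.mul_rpow ht0.le (hα0 j)
        rw [h1]; exact hαsum.mul_left _
      · intro j k
        calc ‖W j k‖ ≤ α j * β k := hdom j k
          _ ≤ t * α j * β k := by
              rw [mul_assoc]
              exact le_mul_of_one_le_left (mul_nonneg (hα0 j) (hβ0 k)) ht1
      · have h1 : (fun j => (t * α j) ^ e) = fun j => t ^ e * α j ^ e :=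
          funext fun j => Real.mul_rpow ht0.le (hα0 j)
        rw [h1, tsum_mul_left,
          Real.mul_rpow (Real.rpow_nonneg ht0.le e)
            (tsum_nonneg fun j => Real.rpow_nonneg (hα0 j) e),
          hxe _ ht0.le, mul_assoc, ← hAB_def, ht_def, div_mul_cancel₀ _ hABpos.ne']
end

section
/- Let 0 < p < 1 and let W = {w_{jk}}_{j,k≥0} be a matrix in 𝒲_p. Assume that |w_{jk}| ≥ 1 for all (j,k) in a finite subset Λ of ℕ×ℕ. Then ‖W‖_{𝒲_p} ≥ |Λ|^{(1−p)/(2p)}, where |Λ| is the number of elements of Λ. -/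
open scoped BigOperators

/-- Subadditivity of `x ^ q` for `0 ≤ q ≤ 1` on nonnegative reals. -/
lemma aux_rpow_add_le {q a b : ℝ} (hq0 : 0 ≤ q) (hq1 : q ≤ 1) (ha : 0 ≤ a) (hb : 0 ≤ b) :
    (a + b) ^ q ≤ a ^ q + b ^ q := by
  lift a to NNReal using ha
  lift b to NNReal using hb
  exact_mod_cast NNReal.rpow_add_le_add_rpow a b hq0 hq1

/-- `(∑ f)^q ≤ ∑ f^q` for `0 < q ≤ 1`, nonnegative `f`, finite sums. -/
lemma aux_sum_rpow_le {q : ℝ} (hq0 : 0 < q) (hq1 : q ≤ 1) {ι : Type*} (s : Finset ι)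
    (f : ι → ℝ) (hf : ∀ i, 0 ≤ f i) : (∑ i ∈ s, f i) ^ q ≤ ∑ i ∈ s, f i ^ q := by
  classical
  induction s using Finset.cons_induction with
  | empty => simp [Real.zero_rpow hq0.ne']
  | cons a s ha ih =>
    rw [Finset.sum_cons, Finset.sum_cons]
    calc (f a + ∑ i ∈ s, f i) ^ q ≤ f a ^ q + (∑ i ∈ s, f i) ^ q :=
          aux_rpow_add_le hq0.le hq1 (hf a) (Finset.sum_nonneg fun i _ => hf i)
      _ ≤ f a ^ q + ∑ i ∈ s, f i ^ q := add_le_add le_rfl ih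

/-- For a nonnegative sequence with summable `u^{2p}` (`0 < p < 1`), the squares are
summable and `(∑ u²)^p ≤ ∑ u^{2p}`. -/
lemma aux_row_bound {p : ℝ} (hp0 : 0 < p) (hp1 : p < 1) (u : ℕ → ℝ) (hu : ∀ l, 0 ≤ u l)
    (hsum : Summable fun l => u l ^ (2 * p)) :
    Summable (fun l => u l ^ 2) ∧ (∑' l, u l ^ 2) ^ p ≤ ∑' l, u l ^ (2 * p) := by
  set s : ℝ := ∑' l, u l ^ (2 * p) with hs
  have hs0 : 0 ≤ s := tsum_nonneg fun l => Real.rpow_nonneg (hu l) _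
  have hterm : ∀ l, u l ^ (2 * p) ≤ s :=
    fun l => Summable.le_tsum hsum l fun j _ => Real.rpow_nonneg (hu j) _
  have hpow2 : ∀ l, (u l : ℝ) ^ 2 = u l ^ ((2 : ℝ)) := fun l => by
    rw [show ((2 : ℝ)) = ((2 : ℕ) : ℝ) by norm_num, Real.rpow_natCast]
  -- pointwise bound : u² ≤ u^{2p} * s^{(1-p)/p}
  have hb : ∀ l, u l ^ 2 ≤ u l ^ (2 * p) * s ^ ((1 - p) / p) := by
    intro l
    have h1 : u l ^ (2 : ℝ) = u l ^ (2 * p) * u l ^ (2 - 2 * p) := by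
      rw [← Real.rpow_add' (hu l) (by norm_num)]
      ring_nf
    have h2 : u l ^ (2 - 2 * p) = (u l ^ (2 * p)) ^ ((1 - p) / p) := by
      rw [← Real.rpow_mul (hu l)]
      congr 1
      field_simp
    have h3 : (u l ^ (2 * p)) ^ ((1 - p) / p) ≤ s ^ ((1 - p) / p) :=
      Real.rpow_le_rpow (Real.rpow_nonneg (hu l) _) (hterm l)
        (div_nonneg (by linarith) hp0.le)
    calc u l ^ 2 = u l ^ (2 * p) * u l ^ (2 - 2 * p) := by rw [hpow2, h1]
      _ = u l ^ (2 * p) * (u l ^ (2 * p)) ^ ((1 - p) / p) := by rw [h2]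
      _ ≤ u l ^ (2 * p) * s ^ ((1 - p) / p) :=
          mul_le_mul_of_nonneg_left h3 (Real.rpow_nonneg (hu l) _)
  have hsum2 : Summable fun l => u l ^ 2 :=
    Summable.of_nonneg_of_le (fun l => sq_nonneg _) hb (hsum.mul_right _)
  refine ⟨hsum2, ?_⟩
  -- (∑ u²)^p ≤ s
  have hkey : (∑' l, u l ^ 2) ≤ s ^ (1 / p) := by
    refine Summable.tsum_le_of_sum_le hsum2 fun F => ?_
    have h4 : (∑ l ∈ F, u l ^ 2) ^ p ≤ s := by
      calc (∑ l ∈ F, u l ^ 2) ^ p ≤ ∑ l ∈ F, (u l ^ 2) ^ p :=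
            aux_sum_rpow_le hp0 hp1.le F _ fun l => sq_nonneg _
        _ = ∑ l ∈ F, u l ^ (2 * p) := by
            refine Finset.sum_congr rfl fun l _ => ?_
            rw [hpow2, ← Real.rpow_mul (hu l)]
        _ ≤ s := Summable.sum_le_tsum F (fun l _ => Real.rpow_nonneg (hu l) _) hsum
    calc (∑ l ∈ F, u l ^ 2)
        = ((∑ l ∈ F, u l ^ 2) ^ p) ^ (1 / p) := by
          rw [← Real.rpow_mul (Finset.sum_nonneg fun l _ => sq_nonneg _)]
          rw [mul_one_div, div_self hp0.ne', Real.rpow_one]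
      _ ≤ s ^ (1 / p) := Real.rpow_le_rpow (Real.rpow_nonneg
            (Finset.sum_nonneg fun l _ => sq_nonneg _) _) h4 (by positivity)
  calc (∑' l, u l ^ 2) ^ p ≤ (s ^ (1 / p)) ^ p :=
        Real.rpow_le_rpow (tsum_nonneg fun l => sq_nonneg _) hkey hp0.le
    _ = s := by
        rw [← Real.rpow_mul hs0, one_div, inv_mul_cancel₀ hp0.ne', Real.rpow_one]

/-- Cauchy–Schwarz for infinite sums of nonnegative sequences. -/
lemma aux_tsum_cs (u v : ℕ → ℝ) (hu : ∀ l, 0 ≤ u l) (hv : ∀ l, 0 ≤ v l)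
    (hu2 : Summable fun l => u l ^ 2) (hv2 : Summable fun l => v l ^ 2) :
    Summable (fun l => u l * v l) ∧
      (∑' l, u l * v l) ≤ Real.sqrt ((∑' l, u l ^ 2) * (∑' l, v l ^ 2)) := by
  have huv : Summable fun l => u l * v l := by
    refine Summable.of_nonneg_of_le (fun l => mul_nonneg (hu l) (hv l)) (fun l => ?_)
      ((hu2.add hv2).div_const 2)
    nlinarith [sq_nonneg (u l - v l)]
  refine ⟨huv, Summable.tsum_le_of_sum_le huv fun F => ?_⟩
  have hP0 : 0 ≤ ∑' l, u l ^ 2 := tsum_nonneg fun l => sq_nonneg _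
  have hQ0 : 0 ≤ ∑' l, v l ^ 2 := tsum_nonneg fun l => sq_nonneg _
  rw [Real.le_sqrt (Finset.sum_nonneg fun l _ => mul_nonneg (hu l) (hv l))
    (mul_nonneg hP0 hQ0)]
  calc (∑ l ∈ F, u l * v l) ^ 2 ≤ (∑ l ∈ F, u l ^ 2) * ∑ l ∈ F, v l ^ 2 :=
        Finset.sum_mul_sq_le_sq_mul_sq F u v
    _ ≤ (∑' l, u l ^ 2) * (∑' l, v l ^ 2) :=
        mul_le_mul (Summable.sum_le_tsum F (fun l _ => sq_nonneg _) hu2)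
          (Summable.sum_le_tsum F (fun l _ => sq_nonneg _) hv2)
          (Finset.sum_nonneg fun l _ => sq_nonneg _) hP0

/-- Corollary 6.7: for `0 < p < 1`, if `W ∈ 𝒲_p` and `|w_{jk}| ≥ 1` on a finite set `Λ`,
then `‖W‖_{𝒲_p} ≥ |Λ|^{(1-p)/(2p)}`. -/
theorem stmt15 (p : ℝ) (hp0 : 0 < p) (hp1 : p < 1)
    (W : ℕ → ℕ → ℂ) (hW : (wReprVals p W).Nonempty)
    (Λ : Finset (ℕ × ℕ)) (hΛ : ∀ jk ∈ Λ, 1 ≤ ‖W jk.1 jk.2‖) :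
    (Λ.card : ℝ) ^ ((1 - p) / (2 * p)) ≤ sInf (wReprVals p W) := by
  have h1p : (0 : ℝ) < 1 - p := by linarith
  set q : ℝ := 1 / (1 - p) with hqdef
  have hq0 : 0 < q := by positivity
  set e : ℝ := (1 - p) / (2 * p) with hedef
  have he0 : 0 ≤ e := by positivity
  refine le_csInf hW ?_
  rintro c ⟨X, Y, ⟨hX1, hX2⟩, ⟨hY1, hY2⟩, hSum, rfl⟩
  set s : ℕ → ℝ := fun j => ∑' k, ‖X j k‖ ^ (2 * p) with hsdef
  set t : ℕ → ℝ := fun k => ∑' l, ‖Y k l‖ ^ (2 * p) with htdef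
  have hs0 : ∀ j, 0 ≤ s j := fun j => tsum_nonneg fun k => Real.rpow_nonneg (by positivity) _
  have ht0 : ∀ k, 0 ≤ t k := fun k => tsum_nonneg fun l => Real.rpow_nonneg (by positivity) _
  -- the key pointwise bound on Λ
  have key : ∀ jk ∈ Λ, (1 : ℝ) ≤ s jk.1 ^ q * t jk.2 ^ q := by
    rintro ⟨j, k⟩ hjk
    set u : ℕ → ℝ := fun l => ‖X j l‖ with hudef
    set v : ℕ → ℝ := fun l => ‖Y k l‖ with hvdef
    have hu : ∀ l, 0 ≤ u l := fun l => norm_nonneg _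
    have hv : ∀ l, 0 ≤ v l := fun l => norm_nonneg _
    obtain ⟨hu2, hup⟩ := aux_row_bound hp0 hp1 u hu (hX1 j)
    obtain ⟨hv2, hvp⟩ := aux_row_bound hp0 hp1 v hv (hY1 k)
    obtain ⟨huv, hcs⟩ := aux_tsum_cs u v hu hv hu2 hv2
    set P : ℝ := ∑' l, u l ^ 2 with hPdef
    set Q : ℝ := ∑' l, v l ^ 2 with hQdef
    have hP0 : 0 ≤ P := tsum_nonneg fun l => sq_nonneg _
    have hQ0 : 0 ≤ Q := tsum_nonneg fun l => sq_nonneg _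
    -- 1 ≤ |W j k| ≤ ∑' u*v ≤ √(P*Q)
    have h1 : (1 : ℝ) ≤ ∑' l, u l * v l := by
      refine le_trans (hΛ _ hjk) ?_
      have := (hSum j k).tsum_eq
      calc ‖W j k‖ = ‖∑' l, X j l * Y k l‖ := by
            rw [this]
        _ ≤ ∑' l, ‖X j l * Y k l‖ := norm_tsum_le_tsum_norm (by
              simpa [norm_mul] using huv)
        _ = ∑' l, u l * v l := by
            simp [hudef, hvdef, norm_mul]
    have h2 : (1 : ℝ) ≤ P * Q := Real.one_le_sqrt.mp (le_trans h1 hcs)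
    -- hence 1 ≤ s j * t k
    have h3 : (1 : ℝ) ≤ s j * t k := by
      have h4 : (1 : ℝ) ≤ (P * Q) ^ p := by
        calc (1 : ℝ) = (1 : ℝ) ^ p := (Real.one_rpow p).symm
          _ ≤ (P * Q) ^ p := Real.rpow_le_rpow zero_le_one h2 hp0.le
      calc (1 : ℝ) ≤ (P * Q) ^ p := h4
        _ = P ^ p * Q ^ p := Real.mul_rpow hP0 hQ0
        _ ≤ s j * t k := mul_le_mul hup hvp (Real.rpow_nonneg hQ0 _) (hs0 j)
    calc (1 : ℝ) = (1 : ℝ) ^ q := (Real.one_rpow q).symm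
      _ ≤ (s j * t k) ^ q := Real.rpow_le_rpow zero_le_one h3 hq0.le
      _ = s j ^ q * t k ^ q := Real.mul_rpow (hs0 j) (ht0 k)
  -- summation chain
  set A : ℝ := ∑' j, s j ^ q with hAdef
  set B : ℝ := ∑' k, t k ^ q with hBdef
  have hA0 : 0 ≤ A := tsum_nonneg fun j => Real.rpow_nonneg (hs0 j) _
  have hB0 : 0 ≤ B := tsum_nonneg fun k => Real.rpow_nonneg (ht0 k) _
  have hcard : (Λ.card : ℝ) ≤ A * B := by
    set J : Finset ℕ := Λ.image Prod.fst with hJdef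
    set K : Finset ℕ := Λ.image Prod.snd with hKdef
    have hsub : Λ ⊆ J ×ˢ K := by
      intro x hx
      rw [Finset.mem_product]
      exact ⟨Finset.mem_image_of_mem _ hx, Finset.mem_image_of_mem _ hx⟩
    calc (Λ.card : ℝ) = ∑ jk ∈ Λ, (1 : ℝ) := by simp
      _ ≤ ∑ jk ∈ Λ, s jk.1 ^ q * t jk.2 ^ q := Finset.sum_le_sum key
      _ ≤ ∑ jk ∈ J ×ˢ K, s jk.1 ^ q * t jk.2 ^ q :=
          Finset.sum_le_sum_of_subset_of_nonneg hsub fun i _ _ =>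
            mul_nonneg (Real.rpow_nonneg (hs0 _) _) (Real.rpow_nonneg (ht0 _) _)
      _ = (∑ j ∈ J, s j ^ q) * (∑ k ∈ K, t k ^ q) := by
          rw [Finset.sum_mul_sum, Finset.sum_product]
      _ ≤ A * B :=
          mul_le_mul (Summable.sum_le_tsum J (fun j _ => Real.rpow_nonneg (hs0 j) _) hX2)
            (Summable.sum_le_tsum K (fun k _ => Real.rpow_nonneg (ht0 k) _) hY2)
            (Finset.sum_nonneg fun k _ => Real.rpow_nonneg (ht0 k) _) hA0
  have hfinal : xiNorm p X * xiNorm p Y = A ^ e * B ^ e := rfl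
  rw [hfinal, ← Real.mul_rpow hA0 hB0]
  exact Real.rpow_le_rpow (Nat.cast_nonneg _) hcard he0
end

section
/- Let 0 < p < 1 and let W = {w_{jk}}_{j,k≥0} be a matrix of rank one, i.e. w_{jk} = u_j v_k for sequences u = {u_j}_{j≥0} and v = {v_k}_{k≥0} of complex numbers. Then W ∈ 𝒲_p if and only if ∑_{j,k} |w_{jk}|^{2p/(1−p)} < ∞, and in that case ‖W‖_{𝒲_p} = (∑_{j,k} |w_{jk}|^{2p/(1−p)})^{(1−p)/(2p)} = ‖u‖_{ℓ^{2p♯}} ‖v‖_{ℓ^{2p♯}}. -/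
open scoped BigOperators

private lemma tsum_rpow_le_rpow_tsum {f : ℕ → ℝ} (hf0 : ∀ i, 0 ≤ f i) (hf : Summable f) {s : ℝ}
    (hs : 1 ≤ s) :
    Summable (fun i => f i ^ s) ∧ ∑' i, f i ^ s ≤ (∑' i, f i) ^ s := by
  set C := ∑' i, f i with hC
  have hC0 : 0 ≤ C := tsum_nonneg hf0
  have hle : ∀ i, f i ^ s ≤ C ^ (s - 1) * f i := by
    intro i
    rcases eq_or_lt_of_le (hf0 i) with h | h
    · rw [← h, Real.zero_rpow (by linarith)]
      positivity
    · have hfi : f i ≤ C := hf.le_tsum i fun j _ => hf0 j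
      have he : f i ^ s = f i ^ (s - 1) * f i := by
        rw [← Real.rpow_add_one (ne_of_gt h) (s - 1), sub_add_cancel]
      rw [he]
      have : f i ^ (s - 1) ≤ C ^ (s - 1) :=
        Real.rpow_le_rpow (le_of_lt h) hfi (by linarith)
      exact mul_le_mul_of_nonneg_right this (hf0 i)
  have hsum : Summable (fun i => f i ^ s) :=
    Summable.of_nonneg_of_le (fun i => Real.rpow_nonneg (hf0 i) s) hle (hf.mul_left _)
  refine ⟨hsum, ?_⟩
  calc ∑' i, f i ^ s ≤ ∑' i, C ^ (s - 1) * f i := Summable.tsum_le_tsum hle hsum (hf.mul_left _)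
    _ = C ^ (s - 1) * C := by rw [tsum_mul_left]
    _ = C ^ s := by
        rcases eq_or_lt_of_le hC0 with h | h
        · rw [← h, mul_zero, Real.zero_rpow (by linarith : s ≠ 0)]
        · rw [← Real.rpow_add_one (ne_of_gt h) (s - 1), sub_add_cancel]

set_option maxHeartbeats 1000000 in
private lemma core {p : ℝ} (hp0 : 0 < p) (hp1 : p < 1) {X Y W : ℕ → ℕ → ℂ}
    (hX : HasXiNorm p X) (hY : HasXiNorm p Y)
    (hW : ∀ j k, HasSum (fun l => X j l * Y k l) (W j k)) :
    Summable (fun jk : ℕ × ℕ => ‖W jk.1 jk.2‖ ^ (2 * p / (1 - p))) ∧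
      (∑' jk : ℕ × ℕ, ‖W jk.1 jk.2‖ ^ (2 * p / (1 - p))) ^ ((1 - p) / (2 * p)) ≤
        xiNorm p X * xiNorm p Y := by
  have hp1' : (0:ℝ) < 1 - p := by linarith
  have hq0 : (0:ℝ) < 2 * p / (1 - p) := by positivity
  set S : ℕ → ℝ := fun j => ∑' l, ‖X j l‖ ^ (2 * p) with hSdef
  set T : ℕ → ℝ := fun k => ∑' l, ‖Y k l‖ ^ (2 * p) with hTdef
  have hS0 : ∀ j, 0 ≤ S j := fun j => tsum_nonneg fun l => Real.rpow_nonneg (norm_nonneg _) _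
  have hT0 : ∀ k, 0 ≤ T k := fun k => tsum_nonneg fun l => Real.rpow_nonneg (norm_nonneg _) _
  have hsq : ∀ (Z : ℕ → ℕ → ℂ) (_ : ∀ j, Summable fun l => ‖Z j l‖ ^ (2 * p)) (j : ℕ),
      Summable (fun l => ‖Z j l‖ ^ (2:ℝ)) ∧
        ∑' l, ‖Z j l‖ ^ (2:ℝ) ≤ (∑' l, ‖Z j l‖ ^ (2 * p)) ^ (1 / p) := by
    intro Z hZ j
    have h1 := tsum_rpow_le_rpow_tsum
      (f := fun l => ‖Z j l‖ ^ (2 * p))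
      (fun l => Real.rpow_nonneg (norm_nonneg _) _) (hZ j)
      (s := 1 / p) (by rw [le_div_iff₀ hp0]; linarith)
    have heq : (fun l => (‖Z j l‖ ^ (2 * p)) ^ (1 / p))
        = fun l => ‖Z j l‖ ^ (2:ℝ) := by
      funext l
      rw [← Real.rpow_mul (norm_nonneg _)]
      congr 1
      field_simp
    rw [heq] at h1
    exact h1
  have key : ∀ j k, ‖W j k‖ ≤ S j ^ (1 / (2 * p)) * T k ^ (1 / (2 * p)) := by
    intro j k
    have hX2 := hsq X hX.1 j
    have hY2 := hsq Y hY.1 k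
    have hpq : Real.HolderConjugate 2 2 := Real.HolderConjugate.two_two
    have CS := Real.summable_and_inner_le_Lp_mul_Lq_tsum_of_nonneg (f := fun l => ‖X j l‖)
      (g := fun l => ‖Y k l‖) hpq (fun _ => norm_nonneg _)
      (fun _ => norm_nonneg _) hX2.1 hY2.1
    have hsn : Summable fun l => ‖X j l * Y k l‖ := by
      simpa [norm_mul] using CS.1
    have h1 : ‖W j k‖ ≤ ∑' l, ‖X j l‖ * ‖Y k l‖ := by
      rw [← (hW j k).tsum_eq]
      calc ‖∑' l, X j l * Y k l‖ = ‖∑' l, X j l * Y k l‖ :=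
            rfl
        _ ≤ ∑' l, ‖X j l * Y k l‖ := norm_tsum_le_tsum_norm hsn
        _ = ∑' l, ‖X j l‖ * ‖Y k l‖ := by
            simp [norm_mul]
    have h2 : (∑' l, ‖X j l‖ ^ (2:ℝ)) ^ (1/(2:ℝ))
        ≤ S j ^ (1 / (2 * p)) := by
      have := Real.rpow_le_rpow (tsum_nonneg fun l => Real.rpow_nonneg (norm_nonneg _) _)
        hX2.2 (by norm_num : (0:ℝ) ≤ 1/2)
      refine this.trans (le_of_eq ?_)
      rw [← Real.rpow_mul (hS0 j)]
      congr 1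
      ring
    have h3 : (∑' l, ‖Y k l‖ ^ (2:ℝ)) ^ (1/(2:ℝ))
        ≤ T k ^ (1 / (2 * p)) := by
      have := Real.rpow_le_rpow (tsum_nonneg fun l => Real.rpow_nonneg (norm_nonneg _) _)
        hY2.2 (by norm_num : (0:ℝ) ≤ 1/2)
      refine this.trans (le_of_eq ?_)
      rw [← Real.rpow_mul (hT0 k)]
      congr 1
      ring
    refine h1.trans (CS.2.trans ?_)
    exact mul_le_mul h2 h3 (Real.rpow_nonneg (tsum_nonneg fun l =>
      Real.rpow_nonneg (norm_nonneg _) _) _) (Real.rpow_nonneg (hS0 j) _)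
  have h2 : ∀ j k, ‖W j k‖ ^ (2 * p / (1 - p))
      ≤ S j ^ (1 / (1 - p)) * T k ^ (1 / (1 - p)) := by
    intro j k
    have := Real.rpow_le_rpow (norm_nonneg _) (key j k) (le_of_lt hq0)
    refine this.trans (le_of_eq ?_)
    rw [Real.mul_rpow (Real.rpow_nonneg (hS0 j) _) (Real.rpow_nonneg (hT0 k) _),
      ← Real.rpow_mul (hS0 j), ← Real.rpow_mul (hT0 k)]
    have : 1 / (2 * p) * (2 * p / (1 - p)) = 1 / (1 - p) := by
      field_simp
    rw [this]
  have hgS : Summable fun j => S j ^ (1 / (1 - p)) := hX.2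
  have hgT : Summable fun k => T k ^ (1 / (1 - p)) := hY.2
  have hg : Summable (fun jk : ℕ × ℕ => S jk.1 ^ (1 / (1 - p)) * T jk.2 ^ (1 / (1 - p))) :=
    hgS.mul_of_nonneg hgT (fun j => Real.rpow_nonneg (hS0 j) _)
      (fun k => Real.rpow_nonneg (hT0 k) _)
  have hWsum : Summable (fun jk : ℕ × ℕ => ‖W jk.1 jk.2‖ ^ (2 * p / (1 - p))) :=
    Summable.of_nonneg_of_le (fun jk => Real.rpow_nonneg (norm_nonneg _) _)
      (fun jk => h2 jk.1 jk.2) hg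
  refine ⟨hWsum, ?_⟩
  have hts : (∑' jk : ℕ × ℕ, ‖W jk.1 jk.2‖ ^ (2 * p / (1 - p)))
      ≤ (∑' j, S j ^ (1 / (1 - p))) * (∑' k, T k ^ (1 / (1 - p))) := by
    have := Summable.tsum_le_tsum (fun jk : ℕ × ℕ => h2 jk.1 jk.2) hWsum hg
    refine this.trans (le_of_eq ?_)
    rw [Summable.tsum_prod' hg fun j => hg.prod_factor j]
    simp_rw [tsum_mul_left]
    rw [tsum_mul_right]
  have := Real.rpow_le_rpow (tsum_nonneg fun jk => Real.rpow_nonneg (norm_nonneg _) _)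
    hts (by positivity : (0:ℝ) ≤ (1 - p) / (2 * p))
  refine this.trans (le_of_eq ?_)
  rw [Real.mul_rpow (tsum_nonneg fun j => Real.rpow_nonneg (hS0 j) _)
    (tsum_nonneg fun k => Real.rpow_nonneg (hT0 k) _)]
  rfl

private lemma canon {p : ℝ} (hp0 : 0 < p) (hp1 : p < 1) (w : ℕ → ℂ)
    (hw : Summable fun j => ‖w j‖ ^ (2 * p / (1 - p))) :
    HasXiNorm p (fun j l => if l = 0 then w j else 0) ∧
      xiNorm p (fun j l => if l = 0 then w j else 0)
        = (∑' j, ‖w j‖ ^ (2 * p / (1 - p))) ^ ((1 - p) / (2 * p)) := by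
  have hp1' : (0:ℝ) < 1 - p := by linarith
  have h2p : (2 * p) ≠ 0 := ne_of_gt (by positivity)
  have hfun : ∀ j, (fun l : ℕ => ‖if l = 0 then w j else 0‖ ^ (2 * p))
      = fun l : ℕ => if l = 0 then ‖w j‖ ^ (2 * p) else 0 := by
    intro j; funext l
    split_ifs with h
    · rfl
    · simp [Real.zero_rpow h2p]
  have hsum1 : ∀ j : ℕ, Summable fun l : ℕ => ‖if l = 0 then w j else 0‖ ^ (2 * p) := by
    intro j
    rw [hfun j]
    exact (hasSum_ite_eq 0 _).summable
  have htsum : ∀ j : ℕ, (∑' l : ℕ, ‖if l = 0 then w j else 0‖ ^ (2 * p)) ^ (1/(1-p))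
      = ‖w j‖ ^ (2 * p / (1 - p)) := by
    intro j
    rw [hfun j, tsum_ite_eq, ← Real.rpow_mul (norm_nonneg _), mul_one_div]
  have hfun2 : (fun j : ℕ =>
      (∑' l : ℕ, ‖if l = 0 then w j else 0‖ ^ (2 * p)) ^ (1/(1-p)))
      = fun j => ‖w j‖ ^ (2 * p / (1 - p)) := funext htsum
  refine ⟨⟨hsum1, ?_⟩, ?_⟩
  · show Summable fun j : ℕ =>
      (∑' l : ℕ, ‖if l = 0 then w j else 0‖ ^ (2 * p)) ^ (1/(1-p))
    rw [hfun2]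
    exact hw
  · show (∑' j : ℕ,
      (∑' l : ℕ, ‖if l = 0 then w j else 0‖ ^ (2 * p)) ^ (1/(1-p))) ^ ((1-p)/(2*p))
      = _
    rw [hfun2]

private lemma zero_mem {p : ℝ} (hp0 : 0 < p) (hp1 : p < 1) {W : ℕ → ℕ → ℂ}
    (hW0 : ∀ j k, W j k = 0) : (0:ℝ) ∈ wReprVals p W := by
  have hp1' : (0:ℝ) < 1 - p := by linarith
  have h2p : (2 * p) ≠ 0 := ne_of_gt (by positivity)
  have h1p : (1 / (1 - p)) ≠ 0 := ne_of_gt (by positivity)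
  have hep : ((1 - p) / (2 * p)) ≠ 0 := ne_of_gt (by positivity)
  have hxi : HasXiNorm p (fun _ _ => 0) := by
    constructor
    · intro j
      simp only [norm_zero, Real.zero_rpow h2p]
      exact summable_zero
    · simp only [norm_zero, Real.zero_rpow h2p, tsum_zero, Real.zero_rpow h1p]
      exact summable_zero
  have hval : xiNorm p (fun _ _ => 0) = 0 := by
    unfold xiNorm
    simp [Real.zero_rpow h2p, Real.zero_rpow h1p, Real.zero_rpow hep]
  exact ⟨fun _ _ => 0, fun _ _ => 0, hxi, hxi,
    fun j k => by simpa [hW0 j k] using hasSum_zero (α := ℂ) (β := ℕ),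
    by rw [hval, mul_zero]⟩

private lemma wlb {p : ℝ} {W : ℕ → ℕ → ℂ} {c : ℝ} (hc : c ∈ wReprVals p W) : 0 ≤ c := by
  obtain ⟨X, Y, _, _, _, rfl⟩ := hc
  have h1 : 0 ≤ xiNorm p X := Real.rpow_nonneg (tsum_nonneg fun j =>
    Real.rpow_nonneg (tsum_nonneg fun k => Real.rpow_nonneg (norm_nonneg _) _) _) _
  have h2 : 0 ≤ xiNorm p Y := Real.rpow_nonneg (tsum_nonneg fun j =>
    Real.rpow_nonneg (tsum_nonneg fun k => Real.rpow_nonneg (norm_nonneg _) _) _) _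
  exact mul_nonneg h1 h2

private lemma extract {q : ℝ} {u v : ℕ → ℂ}
    (hsum : Summable fun jk : ℕ × ℕ => ‖u jk.1 * v jk.2‖ ^ q)
    {k0 : ℕ} (hk0 : v k0 ≠ 0) : Summable fun j => ‖u j‖ ^ q := by
  have hinj : Function.Injective (fun j : ℕ => ((j, k0) : ℕ × ℕ)) :=
    fun a b h => (Prod.ext_iff.mp h).1
  have h0 : Summable fun j => ‖u j * v k0‖ ^ q := by
    simpa only [Function.comp_def] using hsum.comp_injective hinj
  have heq : (fun j => ‖u j * v k0‖ ^ q)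
      = fun j => ‖u j‖ ^ q * ‖v k0‖ ^ q := by
    funext j
    rw [norm_mul, Real.mul_rpow (norm_nonneg _) (norm_nonneg _)]
  rw [heq] at h0
  have hc : 0 < ‖v k0‖ ^ q := Real.rpow_pos_of_pos (norm_pos_iff.mpr hk0) q
  have := h0.mul_right (‖v k0‖ ^ q)⁻¹
  simpa [mul_assoc, mul_inv_cancel₀ (ne_of_gt hc)] using this

private lemma extract' {q : ℝ} {u v : ℕ → ℂ}
    (hsum : Summable fun jk : ℕ × ℕ => ‖u jk.1 * v jk.2‖ ^ q)
    {j0 : ℕ} (hj0 : u j0 ≠ 0) : Summable fun k => ‖v k‖ ^ q := by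
  have hinj : Function.Injective (fun k : ℕ => ((j0, k) : ℕ × ℕ)) :=
    fun a b h => (Prod.ext_iff.mp h).2
  have h0 : Summable fun k => ‖u j0 * v k‖ ^ q := by
    simpa only [Function.comp_def] using hsum.comp_injective hinj
  have heq : (fun k => ‖u j0 * v k‖ ^ q)
      = fun k => ‖v k‖ ^ q * ‖u j0‖ ^ q := by
    funext k
    rw [norm_mul, Real.mul_rpow (norm_nonneg _) (norm_nonneg _), mul_comm]
  rw [heq] at h0
  have hc : 0 < ‖u j0‖ ^ q := Real.rpow_pos_of_pos (norm_pos_iff.mpr hj0) q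
  have := h0.mul_right (‖u j0‖ ^ q)⁻¹
  simpa [mul_assoc, mul_inv_cancel₀ (ne_of_gt hc)] using this

/-- Theorem 6.8: for `0 < p < 1`, a rank-one matrix `W = {u_j v_k}` belongs to `𝒲_p` iff
`∑_{j,k} |w_{jk}|^{2p/(1-p)} < ∞`, in which case
`‖W‖_{𝒲_p} = (∑_{j,k} |w_{jk}|^{2p/(1-p)})^{(1-p)/(2p)} = ‖u‖_{ℓ^{2p♯}} ‖v‖_{ℓ^{2p♯}}`. -/
theorem stmt16 (p : ℝ) (hp0 : 0 < p) (hp1 : p < 1) (u v : ℕ → ℂ) :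
    ((wReprVals p fun j k => u j * v k).Nonempty ↔
      Summable fun jk : ℕ × ℕ => ‖u jk.1 * v jk.2‖ ^ (2 * p / (1 - p))) ∧
    ((Summable fun jk : ℕ × ℕ => ‖u jk.1 * v jk.2‖ ^ (2 * p / (1 - p))) →
      sInf (wReprVals p fun j k => u j * v k) =
          (∑' jk : ℕ × ℕ, ‖u jk.1 * v jk.2‖ ^ (2 * p / (1 - p))) ^
            ((1 - p) / (2 * p)) ∧
        sInf (wReprVals p fun j k => u j * v k) =
          (∑' j, ‖u j‖ ^ (2 * p / (1 - p))) ^ ((1 - p) / (2 * p)) *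
            (∑' k, ‖v k‖ ^ (2 * p / (1 - p))) ^ ((1 - p) / (2 * p))) := by
  have hp1' : (0:ℝ) < 1 - p := by linarith
  have hq0 : (0:ℝ) < 2 * p / (1 - p) := by positivity
  have hqne : (2 * p / (1 - p)) ≠ 0 := ne_of_gt hq0
  have hep : (0:ℝ) < (1 - p) / (2 * p) := by positivity
  have hepne : ((1 - p) / (2 * p)) ≠ 0 := ne_of_gt hep
  -- canonical membership in the nondegenerate case
  have hmem : ∀ (_ : Summable fun j => ‖u j‖ ^ (2 * p / (1 - p)))
      (_ : Summable fun k => ‖v k‖ ^ (2 * p / (1 - p))),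
      ((∑' j, ‖u j‖ ^ (2 * p / (1 - p))) ^ ((1 - p) / (2 * p)) *
        (∑' k, ‖v k‖ ^ (2 * p / (1 - p))) ^ ((1 - p) / (2 * p)))
        ∈ wReprVals p fun j k => u j * v k := by
    intro hu hv
    obtain ⟨hXu, hXuval⟩ := canon hp0 hp1 u hu
    obtain ⟨hXv, hXvval⟩ := canon hp0 hp1 v hv
    refine ⟨_, _, hXu, hXv, fun j k => ?_, by rw [hXuval, hXvval]⟩
    have : (fun l : ℕ => (if l = 0 then u j else 0) * (if l = 0 then v k else 0))
        = fun l : ℕ => if l = 0 then u j * v k else 0 := by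
      funext l; split_ifs <;> simp
    rw [this]
    exact hasSum_ite_eq 0 (u j * v k)
  constructor
  · constructor
    · rintro ⟨c, X, Y, hX, hY, hWs, rfl⟩
      exact (core hp0 hp1 hX hY hWs).1
    · intro hsum
      by_cases hu0 : ∀ j, u j = 0
      · exact ⟨0, zero_mem hp0 hp1 fun j k => by simp [hu0 j]⟩
      by_cases hv0 : ∀ k, v k = 0
      · exact ⟨0, zero_mem hp0 hp1 fun j k => by simp [hv0 k]⟩
      push_neg at hu0 hv0
      obtain ⟨j0, hj0⟩ := hu0
      obtain ⟨k0, hk0⟩ := hv0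
      exact ⟨_, hmem (extract hsum hk0) (extract' hsum hj0)⟩
  · intro hsum
    have hlb : ∀ c ∈ wReprVals p (fun j k => u j * v k),
        (∑' jk : ℕ × ℕ, ‖u jk.1 * v jk.2‖ ^ (2 * p / (1 - p))) ^
          ((1 - p) / (2 * p)) ≤ c := by
      rintro c ⟨X, Y, hX, hY, hWs, rfl⟩
      exact (core hp0 hp1 hX hY hWs).2
    by_cases hu0 : ∀ j, u j = 0
    · have hzf : (fun jk : ℕ × ℕ => ‖u jk.1 * v jk.2‖ ^ (2 * p / (1 - p)))
          = fun _ => 0 := by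
        funext jk; simp [hu0 jk.1, Real.zero_rpow hqne]
      have h0mem : (0:ℝ) ∈ wReprVals p fun j k => u j * v k :=
        zero_mem hp0 hp1 fun j k => by simp [hu0 j]
      have hInf : sInf (wReprVals p fun j k => u j * v k) = 0 :=
        le_antisymm (csInf_le ⟨0, fun c hc => wlb hc⟩ h0mem)
          (le_csInf ⟨0, h0mem⟩ fun c hc => wlb hc)
      constructor
      · rw [hInf, hzf, tsum_zero, Real.zero_rpow hepne]
      · have : (fun j => ‖u j‖ ^ (2 * p / (1 - p))) = fun _ => 0 := by
          funext j; simp [hu0 j, Real.zero_rpow hqne]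
        rw [hInf, this, tsum_zero, Real.zero_rpow hepne, zero_mul]
    by_cases hv0 : ∀ k, v k = 0
    · have hzf : (fun jk : ℕ × ℕ => ‖u jk.1 * v jk.2‖ ^ (2 * p / (1 - p)))
          = fun _ => 0 := by
        funext jk; simp [hv0 jk.2, Real.zero_rpow hqne]
      have h0mem : (0:ℝ) ∈ wReprVals p fun j k => u j * v k :=
        zero_mem hp0 hp1 fun j k => by simp [hv0 k]
      have hInf : sInf (wReprVals p fun j k => u j * v k) = 0 :=
        le_antisymm (csInf_le ⟨0, fun c hc => wlb hc⟩ h0mem)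
          (le_csInf ⟨0, h0mem⟩ fun c hc => wlb hc)
      constructor
      · rw [hInf, hzf, tsum_zero, Real.zero_rpow hepne]
      · have : (fun k => ‖v k‖ ^ (2 * p / (1 - p))) = fun _ => 0 := by
          funext k; simp [hv0 k, Real.zero_rpow hqne]
        rw [hInf, this, tsum_zero, Real.zero_rpow hepne, mul_zero]
    push_neg at hu0 hv0
    obtain ⟨j0, hj0⟩ := hu0
    obtain ⟨k0, hk0⟩ := hv0
    have hu := extract hsum hk0
    have hv := extract' hsum hj0
    have heqf : (fun jk : ℕ × ℕ => ‖u jk.1 * v jk.2‖ ^ (2 * p / (1 - p)))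
        = fun jk : ℕ × ℕ =>
          ‖u jk.1‖ ^ (2 * p / (1 - p)) * ‖v jk.2‖ ^ (2 * p / (1 - p)) := by
      funext jk
      rw [norm_mul, Real.mul_rpow (norm_nonneg _) (norm_nonneg _)]
    have hsum' : Summable (fun jk : ℕ × ℕ =>
        ‖u jk.1‖ ^ (2 * p / (1 - p)) * ‖v jk.2‖ ^ (2 * p / (1 - p))) := by
      rw [← heqf]; exact hsum
    have hfac : (∑' jk : ℕ × ℕ, ‖u jk.1 * v jk.2‖ ^ (2 * p / (1 - p)))
        = (∑' j, ‖u j‖ ^ (2 * p / (1 - p))) *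
          (∑' k, ‖v k‖ ^ (2 * p / (1 - p))) := by
      rw [heqf, Summable.tsum_prod' hsum' fun j => hsum'.prod_factor j]
      simp_rw [tsum_mul_left]
      rw [tsum_mul_right]
    have hL : (∑' jk : ℕ × ℕ, ‖u jk.1 * v jk.2‖ ^ (2 * p / (1 - p))) ^
          ((1 - p) / (2 * p))
        = (∑' j, ‖u j‖ ^ (2 * p / (1 - p))) ^ ((1 - p) / (2 * p)) *
          (∑' k, ‖v k‖ ^ (2 * p / (1 - p))) ^ ((1 - p) / (2 * p)) := by
      rw [hfac, Real.mul_rpow (tsum_nonneg fun j => Real.rpow_nonneg (norm_nonneg _) _)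
        (tsum_nonneg fun k => Real.rpow_nonneg (norm_nonneg _) _)]
    have hLmem : (∑' jk : ℕ × ℕ, ‖u jk.1 * v jk.2‖ ^ (2 * p / (1 - p))) ^
        ((1 - p) / (2 * p)) ∈ wReprVals p fun j k => u j * v k := by
      rw [hL]; exact hmem hu hv
    have hInf : sInf (wReprVals p fun j k => u j * v k)
        = (∑' jk : ℕ × ℕ, ‖u jk.1 * v jk.2‖ ^ (2 * p / (1 - p))) ^
          ((1 - p) / (2 * p)) :=
      le_antisymm (csInf_le ⟨_, hlb⟩ hLmem) (le_csInf ⟨_, hLmem⟩ hlb)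
    exact ⟨hInf, hInf.trans hL⟩
end

section
/- Let 0 < p < 2 and let N be a positive integer. Then for all N×N complex matrices W = {w_{jk}} and Z = {z_{jk}}, ‖W⋆Z‖_{S_p} ≤ (∑_{j} (max_{k} |w_{jk}|)^{2p/(2−p)})^{(2−p)/(2p)} · (∑_{j,k} |z_{jk}|^2)^{1/2}. -/
open scoped BigOperators
open scoped Matrix

-- auxiliary: star z * z and z * star z as real casts
lemma aux_star_mul_self (z : ℂ) : star z * z = ((‖z‖ ^ 2 : ℝ) : ℂ) := by
  rw [Complex.star_def, mul_comm, Complex.mul_conj, Complex.normSq_eq_norm_sq]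

-- row sums of |V|^2 for V with V * star V = 1
lemma aux_unitary_row {ι : Type*} [Fintype ι] [DecidableEq ι] {V : Matrix ι ι ℂ}
    (hV : V * star V = 1) (j : ι) : ∑ i, ‖V j i‖ ^ 2 = 1 := by
  have h : (V * star V) j j = (1 : Matrix ι ι ℂ) j j := by rw [hV]
  rw [Matrix.one_apply_eq, Matrix.mul_apply] at h
  simp only [Matrix.star_apply] at h
  have h2 : ∀ i : ι, V j i * star (V j i) = ((‖V j i‖ ^ 2 : ℝ) : ℂ) := by
    intro i; rw [mul_comm]; exact aux_star_mul_self _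
  rw [Finset.sum_congr rfl fun i _ => h2 i, ← Complex.ofReal_sum] at h
  exact_mod_cast h

-- Jensen for concave rpow
lemma aux_jensen {ι : Type*} [Fintype ι] (w z : ι → ℝ) (hw : ∀ i, 0 ≤ w i)
    (hw' : ∑ i, w i = 1) (hz : ∀ i, 0 ≤ z i) {t : ℝ} (ht0 : 0 < t) (ht1 : t ≤ 1) :
    ∑ i, w i * z i ^ t ≤ (∑ i, w i * z i) ^ t := by
  have h1t : 1 ≤ 1 / t := (le_div_iff₀ ht0).mpr (by linarith)
  have := Real.arith_mean_le_rpow_mean Finset.univ w (fun i => z i ^ t)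
    (fun i _ => hw i) hw' (fun i _ => Real.rpow_nonneg (hz i) t) h1t
  simp only [one_div_one_div] at this
  calc ∑ i, w i * z i ^ t ≤ (∑ i, w i * (z i ^ t) ^ (1/t)) ^ t := this
    _ = (∑ i, w i * z i) ^ t := by
        congr 1
        refine Finset.sum_congr rfl fun i _ => ?_
        rw [← Real.rpow_mul (hz i), mul_one_div_cancel ht0.ne', Real.rpow_one]

-- column sums
lemma aux_unitary_col {ι : Type*} [Fintype ι] [DecidableEq ι] {V : Matrix ι ι ℂ}
    (hV : star V * V = 1) (i : ι) : ∑ j, ‖V j i‖ ^ 2 = 1 := by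
  have h : (star V * V) i i = (1 : Matrix ι ι ℂ) i i := by rw [hV]
  rw [Matrix.one_apply_eq, Matrix.mul_apply] at h
  simp only [Matrix.star_apply] at h
  rw [Finset.sum_congr rfl fun j _ => aux_star_mul_self (V j i), ← Complex.ofReal_sum] at h
  exact_mod_cast h

-- x ^ t = x * x ^ (t - 1) for 0 ≤ x, t ≠ 0
lemma aux_rpow_split {x t : ℝ} (hx : 0 ≤ x) (ht : t ≠ 0) : x ^ t = x * x ^ (t - 1) := by
  rcases hx.lt_or_eq with h | h
  · nth_rewrite 2 [← Real.rpow_one x]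
    rw [← Real.rpow_add h 1 (t-1)]
    ring_nf
  · rw [← h, Real.zero_rpow ht, zero_mul]

-- diagonal entry of a Hermitian matrix via eigenvalues
lemma aux_diag {ι : Type*} [Fintype ι] [DecidableEq ι] {B : Matrix ι ι ℂ}
    (hB : B.IsHermitian) (j : ι) :
    B j j = ((∑ i, hB.eigenvalues i *
      ‖(hB.eigenvectorUnitary : Matrix ι ι ℂ) j i‖ ^ 2 : ℝ) : ℂ) := by
  conv_lhs => rw [hB.spectral_theorem, Unitary.conjStarAlgAut_apply]
  rw [Matrix.mul_apply, Complex.ofReal_sum]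
  refine Finset.sum_congr rfl fun i _ => ?_
  rw [Matrix.mul_diagonal, Matrix.star_apply]
  have := aux_star_mul_self ((hB.eigenvectorUnitary : Matrix ι ι ℂ) j i)
  push_cast
  rw [mul_comm, ← mul_assoc, this]
  push_cast
  rw [mul_comm]
  congr 1

/-- Schatten `p`-(quasi)norm of a finite square complex matrix:
`(∑ i, s_i(A)^p)^(1/p)` where the `s_i(A)` are the singular values of `A`,
i.e. the square roots of the eigenvalues of `Aᴴ * A`. -/
noncomputable def schattenNorm {ι : Type*} [Fintype ι] [DecidableEq ι] (p : ℝ)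
    (A : Matrix ι ι ℂ) : ℝ :=
  (∑ i, Real.sqrt ((Matrix.isHermitian_conjTranspose_mul_self A).eigenvalues i) ^ p) ^ (1 / p)

/-- Pisier's inequality (7.1), finite version: for `0 < p < 2`,
`‖W ⋆ Z‖_{S_p} ≤ ‖W‖_{ℓ^{p_b}(ℓ∞)} ‖Z‖_{S_2}` where `p_b = 2p/(2-p)` and
`‖Z‖_{S_2} = (∑_{j,k} |z_{jk}|^2)^{1/2}`. -/
theorem stmt18 (p : ℝ) (hp0 : 0 < p) (hp2 : p < 2) (N : ℕ) (hN : 0 < N)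
    (W Z : Matrix (Fin N) (Fin N) ℂ) :
    schattenNorm p (Matrix.hadamard W Z) ≤
      (∑ j, (⨆ k, ‖W j k‖) ^ (2 * p / (2 - p))) ^ ((2 - p) / (2 * p)) *
        (∑ j, ∑ k, ‖Z j k‖ ^ 2) ^ ((1 : ℝ) / 2) := by
  have hFinNe : Nonempty (Fin N) := ⟨⟨0, hN⟩⟩
  have h2p : (0:ℝ) < 2 - p := by linarith
  set t : ℝ := p / 2 with ht
  have ht0 : 0 < t := by rw [ht]; positivity
  have ht1 : t < 1 := by rw [ht]; linarith
  set A : Matrix (Fin N) (Fin N) ℂ := Matrix.hadamard W Z with hAdef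
  set lam : Fin N → ℝ := (Matrix.isHermitian_conjTranspose_mul_self A).eigenvalues with hlam
  set mu : Fin N → ℝ := (Matrix.isHermitian_mul_conjTranspose_self A).eigenvalues with hmu
  have hlam0 : ∀ i, 0 ≤ lam i := fun i => Matrix.eigenvalues_conjTranspose_mul_self_nonneg A i
  have hmu0 : ∀ i, 0 ≤ mu i := fun i => Matrix.eigenvalues_self_mul_conjTranspose_nonneg A i
  have hdW : ∀ (j k : Fin N), ‖W j k‖ ≤ ⨆ k, ‖W j k‖ :=
    fun j k => le_ciSup (f := fun k => ‖W j k‖) (Set.Finite.bddAbove (Set.finite_range _)) k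
  have hd0 : ∀ j, 0 ≤ ⨆ k, ‖W j k‖ :=
    fun j => le_trans (norm_nonneg _) (hdW j ⟨0, hN⟩)
  have hS0 : ∀ j, 0 ≤ ∑ k, ‖Z j k‖ ^ 2 :=
    fun j => Finset.sum_nonneg fun k _ => sq_nonneg _
  set U : Matrix (Fin N) (Fin N) ℂ :=
    ((Matrix.isHermitian_conjTranspose_mul_self A).eigenvectorUnitary : Matrix (Fin N) (Fin N) ℂ)
    with hU
  set V : Matrix (Fin N) (Fin N) ℂ :=
    ((Matrix.isHermitian_mul_conjTranspose_self A).eigenvectorUnitary : Matrix (Fin N) (Fin N) ℂ)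
    with hV
  have hU1 : U * star U = 1 :=
    (Matrix.mem_unitaryGroup_iff).mp ((Matrix.isHermitian_conjTranspose_mul_self A).eigenvectorUnitary).2
  have hU2 : star U * U = 1 :=
    (Matrix.mem_unitaryGroup_iff').mp ((Matrix.isHermitian_conjTranspose_mul_self A).eigenvectorUnitary).2
  have hV1 : V * star V = 1 :=
    (Matrix.mem_unitaryGroup_iff).mp ((Matrix.isHermitian_mul_conjTranspose_self A).eigenvectorUnitary).2
  have hV2 : star V * V = 1 :=
    (Matrix.mem_unitaryGroup_iff').mp ((Matrix.isHermitian_mul_conjTranspose_self A).eigenvectorUnitary).2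
  -- the intertwining matrix
  set M : Matrix (Fin N) (Fin N) ℂ := star V * A * U with hM
  have hMsM : star M * M = Matrix.diagonal (RCLike.ofReal ∘ lam) := by
    have hspec := (Matrix.isHermitian_conjTranspose_mul_self A).conjStarAlgAut_star_eigenvectorUnitary
    rw [Unitary.conjStarAlgAut_apply, Unitary.coe_star, star_star] at hspec
    calc star M * M = star U * (star A * ((V * star V) * (A * U))) := by
          rw [hM]; simp only [star_mul, star_star]; noncomm_ring
      _ = star U * (Aᴴ * A) * U := by
          rw [hV1, Matrix.one_mul, Matrix.star_eq_conjTranspose]; noncomm_ring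
      _ = Matrix.diagonal (RCLike.ofReal ∘ lam) := hspec
  have hMMs : M * star M = Matrix.diagonal (RCLike.ofReal ∘ mu) := by
    have hspec := (Matrix.isHermitian_mul_conjTranspose_self A).conjStarAlgAut_star_eigenvectorUnitary
    rw [Unitary.conjStarAlgAut_apply, Unitary.coe_star, star_star] at hspec
    calc M * star M = star V * (A * ((U * star U) * (star A * V))) := by
          rw [hM]; simp only [star_mul, star_star]; noncomm_ring
      _ = star V * (A * Aᴴ) * V := by
          rw [hU1, Matrix.one_mul, Matrix.star_eq_conjTranspose]; noncomm_ring
      _ = Matrix.diagonal (RCLike.ofReal ∘ mu) := hspec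
  have hcolM : ∀ i, ∑ j, ‖M j i‖ ^ 2 = lam i := by
    intro i
    have h : (star M * M) i i = Matrix.diagonal (RCLike.ofReal ∘ lam) i i := by rw [hMsM]
    rw [Matrix.diagonal_apply_eq, Matrix.mul_apply] at h
    simp only [Matrix.star_apply, Function.comp_apply] at h
    rw [Finset.sum_congr rfl fun j _ => aux_star_mul_self (M j i), ← Complex.ofReal_sum] at h
    exact Complex.ofReal_injective h
  have hrowM : ∀ j, ∑ i, ‖M j i‖ ^ 2 = mu j := by
    intro j
    have h : (M * star M) j j = Matrix.diagonal (RCLike.ofReal ∘ mu) j j := by rw [hMMs]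
    rw [Matrix.diagonal_apply_eq, Matrix.mul_apply] at h
    simp only [Matrix.star_apply, Function.comp_apply] at h
    have h2 : ∀ i : Fin N, M j i * star (M j i) = ((‖M j i‖ ^ 2 : ℝ) : ℂ) := by
      intro i; rw [mul_comm]; exact aux_star_mul_self _
    rw [Finset.sum_congr rfl fun i _ => h2 i, ← Complex.ofReal_sum] at h
    exact Complex.ofReal_injective h
  have hcomm : ∀ j i, M j i ≠ 0 → lam i = mu j := by
    intro j i hne
    have hmm : M * (star M * M) = (M * star M) * M := (Matrix.mul_assoc _ _ _).symm
    rw [hMsM, hMMs] at hmm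
    have h := Matrix.ext_iff.mpr hmm j i
    rw [Matrix.mul_diagonal, Matrix.diagonal_mul] at h
    simp only [Function.comp_apply] at h
    rw [mul_comm ((RCLike.ofReal (mu j) : ℂ)) (M j i)] at h
    have h2 := mul_left_cancel₀ hne h
    exact_mod_cast h2
  -- Step 1: transfer from λ to μ
  have key1 : ∑ i, lam i ^ t = ∑ j, mu j ^ t := by
    calc ∑ i, lam i ^ t = ∑ i, ∑ j, ‖M j i‖ ^ 2 * lam i ^ (t - 1) := by
          refine Finset.sum_congr rfl fun i _ => ?_
          rw [← Finset.sum_mul, hcolM i, ← aux_rpow_split (hlam0 i) ht0.ne']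
      _ = ∑ j, ∑ i, ‖M j i‖ ^ 2 * mu j ^ (t - 1) := by
          rw [Finset.sum_comm]
          refine Finset.sum_congr rfl fun j _ => Finset.sum_congr rfl fun i _ => ?_
          by_cases hMji : M j i = 0
          · simp [hMji]
          · rw [hcomm j i hMji]
      _ = ∑ j, mu j ^ t := by
          refine Finset.sum_congr rfl fun j _ => ?_
          rw [← Finset.sum_mul, hrowM j, ← aux_rpow_split (hmu0 j) ht0.ne']
  -- Step 2: Jensen
  have hdiagH : ∀ j, ∑ i, mu i * ‖V j i‖ ^ 2 = ∑ k, ‖A j k‖ ^ 2 := by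
    intro j
    have h1 := aux_diag (Matrix.isHermitian_mul_conjTranspose_self A) j
    have h2 : (A * Aᴴ) j j = ((∑ k, ‖A j k‖ ^ 2 : ℝ) : ℂ) := by
      rw [Matrix.mul_apply, Complex.ofReal_sum]
      refine Finset.sum_congr rfl fun k _ => ?_
      rw [Matrix.conjTranspose_apply, mul_comm]
      exact aux_star_mul_self _
    rw [h1] at h2
    exact_mod_cast h2
  have key2 : ∑ j, mu j ^ t ≤ ∑ j, (∑ k, ‖A j k‖ ^ 2) ^ t := by
    have hrowV : ∀ j, ∑ i, ‖V j i‖ ^ 2 = 1 := aux_unitary_row hV1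
    have hcolV : ∀ i, ∑ j, ‖V j i‖ ^ 2 = 1 := aux_unitary_col hV2
    calc ∑ i, mu i ^ t = ∑ i, (∑ j, ‖V j i‖ ^ 2) * mu i ^ t := by
          refine Finset.sum_congr rfl fun i _ => ?_
          rw [hcolV i, one_mul]
      _ = ∑ j, ∑ i, ‖V j i‖ ^ 2 * mu i ^ t := by
          simp_rw [Finset.sum_mul]; rw [Finset.sum_comm]
      _ ≤ ∑ j, (∑ i, ‖V j i‖ ^ 2 * mu i) ^ t := by
          refine Finset.sum_le_sum fun j _ => ?_
          exact aux_jensen _ _ (fun i => sq_nonneg _) (hrowV j) hmu0 ht0 ht1.le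
      _ = ∑ j, (∑ k, ‖A j k‖ ^ 2) ^ t := by
          refine Finset.sum_congr rfl fun j _ => ?_
          rw [← hdiagH j]
          congr 1
          exact Finset.sum_congr rfl fun i _ => mul_comm _ _
  -- Step 3: entrywise bound
  have key3 : ∑ j, (∑ k, ‖A j k‖ ^ 2) ^ t
      ≤ ∑ j, ((⨆ k, ‖W j k‖) ^ 2) ^ t * (∑ k, ‖Z j k‖ ^ 2) ^ t := by
    refine Finset.sum_le_sum fun j _ => ?_
    rw [← Real.mul_rpow (sq_nonneg _) (hS0 j)]
    refine Real.rpow_le_rpow (Finset.sum_nonneg fun k _ => sq_nonneg _) ?_ ht0.le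
    rw [Finset.mul_sum]
    refine Finset.sum_le_sum fun k _ => ?_
    have habs : ‖A j k‖ = ‖W j k‖ * ‖Z j k‖ := by
      rw [hAdef, Matrix.hadamard_apply, norm_mul]
    rw [habs, mul_pow]
    exact mul_le_mul_of_nonneg_right
      (pow_le_pow_left₀ (norm_nonneg _) (hdW j k) 2) (sq_nonneg _)
  -- Step 4: Hölder
  have key4 : ∑ j, ((⨆ k, ‖W j k‖) ^ 2) ^ t * (∑ k, ‖Z j k‖ ^ 2) ^ t
      ≤ (∑ j, (⨆ k, ‖W j k‖) ^ (2 * p / (2 - p))) ^ ((2 - p) / 2)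
        * (∑ j, ∑ k, ‖Z j k‖ ^ 2) ^ t := by
    have hpq : Real.HolderConjugate (2 / (2 - p)) (2 / p) := by
      refine Real.holderConjugate_iff.mpr ⟨?_, ?_⟩
      · rw [lt_div_iff₀ h2p]; linarith
      · field_simp; ring
    have hHo := Real.inner_le_Lp_mul_Lq_of_nonneg (f := fun j => ((⨆ k, ‖W j k‖) ^ 2) ^ t)
      (g := fun j => (∑ k, ‖Z j k‖ ^ 2) ^ t) (s := Finset.univ) hpq
      (fun j _ => Real.rpow_nonneg (sq_nonneg _) t) (fun j _ => Real.rpow_nonneg (hS0 j) t)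
    refine le_trans hHo (le_of_eq ?_)
    congr 1
    · rw [one_div_div]
      congr 1
      refine Finset.sum_congr rfl fun j _ => ?_
      rw [← Real.rpow_mul (sq_nonneg _)]
      rw [show t * (2 / (2 - p)) = p / (2 - p) by rw [ht]; ring]
      rw [← Real.rpow_natCast_mul (hd0 j)]
      congr 1
      push_cast; ring
    · rw [one_div_div]
      have hexp : ∀ j, ((∑ k, ‖Z j k‖ ^ 2) ^ t) ^ (2 / p)
          = ∑ k, ‖Z j k‖ ^ 2 := by
        intro j
        rw [← Real.rpow_mul (hS0 j), show t * (2 / p) = 1 by rw [ht]; field_simp, Real.rpow_one]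
      rw [Finset.sum_congr rfl fun j _ => hexp j, ← ht]
  -- assemble
  have hterm : ∀ i, Real.sqrt (lam i) ^ p = lam i ^ t := by
    intro i
    rw [Real.sqrt_eq_rpow, ← Real.rpow_mul (hlam0 i)]
    congr 1
    rw [ht]; ring
  have hX0 : (0:ℝ) ≤ ∑ j, (⨆ k, ‖W j k‖) ^ (2 * p / (2 - p)) :=
    Finset.sum_nonneg fun j _ => Real.rpow_nonneg (hd0 j) _
  have hY0 : (0:ℝ) ≤ ∑ j, ∑ k, ‖Z j k‖ ^ 2 :=
    Finset.sum_nonneg fun j _ => hS0 j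
  simp only [schattenNorm]
  rw [← hlam]
  calc (∑ i, Real.sqrt (lam i) ^ p) ^ (1 / p)
      = (∑ i, lam i ^ t) ^ (1 / p) := by
        rw [Finset.sum_congr rfl fun i _ => hterm i]
    _ ≤ ((∑ j, (⨆ k, ‖W j k‖) ^ (2 * p / (2 - p))) ^ ((2 - p) / 2)
          * (∑ j, ∑ k, ‖Z j k‖ ^ 2) ^ t) ^ (1 / p) := by
        refine Real.rpow_le_rpow
          (Finset.sum_nonneg fun i _ => Real.rpow_nonneg (hlam0 i) t) ?_ (by positivity)
        rw [key1]
        exact le_trans key2 (le_trans key3 key4)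
    _ = (∑ j, (⨆ k, ‖W j k‖) ^ (2 * p / (2 - p))) ^ ((2 - p) / (2 * p)) *
        (∑ j, ∑ k, ‖Z j k‖ ^ 2) ^ ((1 : ℝ) / 2) := by
        rw [Real.mul_rpow (Real.rpow_nonneg hX0 _) (Real.rpow_nonneg hY0 _),
          ← Real.rpow_mul hX0, ← Real.rpow_mul hY0]
        congr 1
        · congr 1
          ring
        · congr 1
          rw [ht]; field_simp
end

section
/- For every positive integer N there exists an N×N complex matrix Z = {z_{jk}} with |z_{jk}| = 1 for all j,k such that for every p ∈ (0,2], sup{‖Z⋆B‖_{S_p} : B an N×N complex matrix with ‖B‖_{S_p} ≤ 1} = N^{1/p − 1/2}. -/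
open scoped BigOperators

open Matrix in
/-- The sum of the eigenvalues of a Hermitian matrix is its trace. -/
lemma eig_sum_trace' {n : Type*} [Fintype n] [DecidableEq n] {A : Matrix n n ℂ}
    (hA : A.IsHermitian) : ((∑ i, hA.eigenvalues i : ℝ) : ℂ) = A.trace := by
  rw [hA.trace_eq_sum_eigenvalues]
  push_cast
  rfl

open Matrix in
/-- The eigenvalues of a scalar matrix are all equal to the scalar. -/
lemma eig_const' {n : Type*} [Fintype n] [DecidableEq n] {A : Matrix n n ℂ} {c : ℝ}
    (hA : A.IsHermitian) (h : A = (c : ℂ) • 1) (i : n) : hA.eigenvalues i = c := by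
  have hd : star (hA.eigenvectorUnitary : Matrix n n ℂ) * A * (hA.eigenvectorUnitary : Matrix n n ℂ)
      = Matrix.diagonal ((RCLike.ofReal ∘ hA.eigenvalues) : n → ℂ) := by
    simpa using hA.conjStarAlgAut_star_eigenvectorUnitary
  subst h
  rw [Matrix.mul_smul, Matrix.smul_mul, Matrix.mul_one,
    (Matrix.mem_unitaryGroup_iff').mp (hA.eigenvectorUnitary).2] at hd
  have := congrFun (congrFun hd.symm i) i
  simp [Matrix.diagonal, Matrix.one_apply] at this
  exact_mod_cast this

open Matrix in
/-- The eigenvalues of an idempotent Hermitian matrix are `0` or `1`. -/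
lemma eig_idem' {n : Type*} [Fintype n] [DecidableEq n] {A : Matrix n n ℂ}
    (hA : A.IsHermitian) (h : A * A = A) (i : n) :
    hA.eigenvalues i = 0 ∨ hA.eigenvalues i = 1 := by
  have hd : star (hA.eigenvectorUnitary : Matrix n n ℂ) * A * (hA.eigenvectorUnitary : Matrix n n ℂ)
      = Matrix.diagonal ((RCLike.ofReal ∘ hA.eigenvalues) : n → ℂ) := by
    simpa using hA.conjStarAlgAut_star_eigenvectorUnitary
  set U := (hA.eigenvectorUnitary : Matrix n n ℂ) with hU
  set D := Matrix.diagonal ((RCLike.ofReal ∘ hA.eigenvalues) : n → ℂ) with hD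
  have hUU : U * star U = 1 := (Matrix.mem_unitaryGroup_iff).mp (hA.eigenvectorUnitary).2
  have key : U * (star U * (A * U)) = A * U := by
    rw [← Matrix.mul_assoc, hUU, Matrix.one_mul]
  have h2 : D * D = D := by
    rw [← hd]
    simp only [Matrix.mul_assoc]
    rw [key, ← Matrix.mul_assoc A A U, h]
  rw [hD, Matrix.diagonal_mul_diagonal] at h2
  have h3 := congrFun (congrFun h2 i) i
  simp [Matrix.diagonal] at h3
  have h4 : (hA.eigenvalues i) * (hA.eigenvalues i) = hA.eigenvalues i := by exact_mod_cast h3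
  have h5 : hA.eigenvalues i * (hA.eigenvalues i - 1) = 0 := by ring_nf; linarith [h4]
  rcases mul_eq_zero.mp h5 with h6 | h6
  · exact Or.inl h6
  · exact Or.inr (by linarith)

open Matrix in
/-- Sum of eigenvalues of `Aᴴ A` is the squared Frobenius norm. -/
lemma eig_sum_normSq' {n : Type*} [Fintype n] [DecidableEq n] (A : Matrix n n ℂ) :
    ∑ i, (Matrix.isHermitian_conjTranspose_mul_self A).eigenvalues i
      = ∑ j, ∑ k, Complex.normSq (A j k) := by
  have h1 := eig_sum_trace' (Matrix.isHermitian_conjTranspose_mul_self A)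
  have h2 : (Aᴴ * A).trace = ((∑ j, ∑ k, Complex.normSq (A j k) : ℝ) : ℂ) := by
    rw [Matrix.trace]
    simp only [Matrix.diag, Matrix.mul_apply, Matrix.conjTranspose_apply, Complex.star_def,
      ← Complex.normSq_eq_conj_mul_self]
    push_cast
    rw [Finset.sum_comm]
  rw [h2] at h1
  exact_mod_cast h1

/-- Hölder-type upper bound: `∑ t^p ≤ N^{1-p/2} (∑ t²)^{p/2}` for `0 < p ≤ 2`. -/
lemma holder_up' {N : ℕ} (t : Fin N → ℝ) (ht : ∀ i, 0 ≤ t i) {p : ℝ} (hp : 0 < p) (hp2 : p ≤ 2) :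
    ∑ i, t i ^ p ≤ (N : ℝ) ^ (1 - p / 2) * (∑ i, t i ^ (2:ℝ)) ^ (p / 2) := by
  rcases eq_or_lt_of_le hp2 with rfl | hlt
  · simp
  · have hcj : Real.HolderConjugate (2 / p) (2 / (2 - p)) := by
      rw [Real.holderConjugate_iff]
      constructor
      · rw [lt_div_iff₀ hp]; linarith
      · field_simp
        ring
    have H := Real.inner_le_Lp_mul_Lq_of_nonneg Finset.univ hcj
      (f := fun i => t i ^ p) (g := fun _ => (1:ℝ))
      (fun i _ => Real.rpow_nonneg (ht i) p) (fun i _ => zero_le_one)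
    simp only [mul_one] at H
    have e1 : ∀ i : Fin N, (t i ^ p) ^ (2 / p) = t i ^ (2:ℝ) := by
      intro i
      rw [← Real.rpow_mul (ht i)]
      congr 1
      field_simp
    have e2 : (1 : ℝ) / (2 / p) = p / 2 := by field_simp
    have e3 : ∑ _i : Fin N, (1:ℝ) ^ (2 / (2 - p)) = (N : ℝ) := by simp
    have e4 : (1 : ℝ) / (2 / (2 - p)) = 1 - p / 2 := by field_simp
    rw [e2, e3, e4] at H
    calc ∑ i, t i ^ p ≤ (∑ i, (t i ^ p) ^ (2/p)) ^ (p/2) * (N:ℝ) ^ (1 - p/2) := by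
          simpa using H
      _ = (N : ℝ) ^ (1 - p / 2) * (∑ i, t i ^ (2:ℝ)) ^ (p / 2) := by
          rw [mul_comm]; congr 2; exact Finset.sum_congr rfl fun i _ => e1 i

/-- Monotonicity of `ℓ^p` norms: `(∑ t²)^{p/2} ≤ ∑ t^p` for `0 < p ≤ 2`. -/
lemma sum_sq_le' {N : ℕ} (t : Fin N → ℝ) (ht : ∀ i, 0 ≤ t i) {p : ℝ} (hp : 0 < p) (hp2 : p ≤ 2) :
    (∑ i, t i ^ (2:ℝ)) ^ (p / 2) ≤ ∑ i, t i ^ p := by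
  set S := ∑ i, t i ^ p with hS
  have hS0 : 0 ≤ S := Finset.sum_nonneg fun i _ => Real.rpow_nonneg (ht i) p
  have hexp : 0 ≤ 2 / p - 1 := by
    rw [sub_nonneg, le_div_iff₀ hp]; linarith
  rcases eq_or_lt_of_le hS0 with hz | hpos
  · have hall : ∀ i, t i = 0 := by
      intro i
      have h1 : t i ^ p = 0 :=
        Finset.sum_eq_zero_iff_of_nonneg
          (fun i _ => Real.rpow_nonneg (ht i) p) |>.mp hz.symm i (Finset.mem_univ i)
      by_contra h
      have : 0 < t i := lt_of_le_of_ne (ht i) (Ne.symm h)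
      exact absurd h1 (ne_of_gt (Real.rpow_pos_of_pos this p))
    have hz2 : ∑ i, t i ^ (2:ℝ) = 0 := Finset.sum_eq_zero fun i _ => by
      rw [hall i, Real.zero_rpow (by norm_num)]
    rw [hz2, ← hz, Real.zero_rpow (by positivity)]
  · have key : ∑ i, t i ^ (2:ℝ) ≤ S ^ (2 / p) := by
      have step : ∀ i, t i ^ (2:ℝ) ≤ S ^ (2 / p - 1) * t i ^ p := by
        intro i
        have hle : t i ^ p ≤ S :=
          Finset.single_le_sum (f := fun i => t i ^ p)
            (fun i _ => Real.rpow_nonneg (ht i) p) (Finset.mem_univ i)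
        have e : t i ^ (2:ℝ) = t i ^ ((2:ℝ) - p) * t i ^ p := by
          rw [← Real.rpow_add' (ht i) (by norm_num)]
          norm_num
        have e2 : t i ^ ((2:ℝ) - p) = (t i ^ p) ^ (2 / p - 1) := by
          rw [← Real.rpow_mul (ht i)]
          congr 1
          field_simp
        rw [e, e2]
        exact mul_le_mul_of_nonneg_right
          (Real.rpow_le_rpow (Real.rpow_nonneg (ht i) p) hle hexp)
          (Real.rpow_nonneg (ht i) p)
      calc ∑ i, t i ^ (2:ℝ) ≤ ∑ i, S ^ (2 / p - 1) * t i ^ p :=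
            Finset.sum_le_sum fun i _ => step i
        _ = S ^ (2 / p - 1) * S := by rw [← Finset.mul_sum]
        _ = S ^ (2 / p) := by rw [← Real.rpow_add_one hpos.ne' (2 / p - 1), sub_add_cancel]
    have hmul : (2 / p) * (p / 2) = 1 := by field_simp
    calc (∑ i, t i ^ (2:ℝ)) ^ (p / 2)
        ≤ (S ^ (2 / p)) ^ (p / 2) :=
          Real.rpow_le_rpow (Finset.sum_nonneg fun i _ => Real.rpow_nonneg (ht i) 2) key
            (by positivity)
      _ = S := by rw [← Real.rpow_mul hS0, hmul, Real.rpow_one]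

open Complex in
/-- The (unnormalized) Fourier matrix. -/
noncomputable def fourierZ (N : ℕ) : Matrix (Fin N) (Fin N) ℂ :=
  Matrix.of fun j k => Complex.exp (((2 * Real.pi * j * k / N : ℝ) : ℂ) * Complex.I)

open Complex Matrix in
lemma fourierZ_abs (N : ℕ) (j k : Fin N) : ‖fourierZ N j k‖ = 1 := by
  simp [fourierZ, Complex.norm_exp]

open Complex Matrix in
lemma fourierZ_mul (N : ℕ) (hN : 0 < N) :
    (fourierZ N)ᴴ * fourierZ N = (N : ℂ) • 1 := by
  ext k l
  have hNR : (0:ℝ) < N := by exact_mod_cast hN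
  have hNC : (N:ℂ) ≠ 0 := by exact_mod_cast hN.ne'
  have lhs : ((fourierZ N)ᴴ * fourierZ N) k l
      = ∑ j : Fin N, Complex.exp (((2 * Real.pi * ((l:ℝ) - (k:ℝ)) / N : ℝ) : ℂ) * Complex.I) ^ (j : ℕ) := by
    simp only [Matrix.mul_apply, Matrix.conjTranspose_apply, fourierZ, Matrix.of_apply]
    refine Finset.sum_congr rfl fun j _ => ?_
    rw [Complex.star_def, ← Complex.exp_conj, ← Complex.exp_nat_mul, ← Complex.exp_add]
    congr 1
    rw [_root_.map_mul, Complex.conj_ofReal, Complex.conj_I]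
    push_cast
    field_simp [hNC]
    ring
  rw [lhs]
  set ζ : ℂ := Complex.exp (((2 * Real.pi * ((l:ℝ) - (k:ℝ)) / N : ℝ) : ℂ) * Complex.I) with hζ
  rcases eq_or_ne k l with rfl | hkl
  · simp [hζ, Matrix.one_apply, Matrix.smul_apply]
  · have hζN : ζ ^ N = 1 := by
      rw [hζ, ← Complex.exp_nat_mul]
      have : (N : ℂ) * (((2 * Real.pi * ((l:ℝ) - (k:ℝ)) / N : ℝ) : ℂ) * Complex.I)
          = (((l:ℤ) - (k:ℤ) : ℤ) : ℂ) * (2 * Real.pi * Complex.I) := by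
        push_cast
        field_simp [hNC]
      rw [this, Complex.exp_int_mul_two_pi_mul_I]
    have hζ1 : ζ ≠ 1 := by
      rw [hζ, Ne, Complex.exp_eq_one_iff]
      intro hex
      obtain ⟨n, hn⟩ := hex
      have hI : ((2 * Real.pi * ((l:ℝ) - (k:ℝ)) / N : ℝ) : ℂ) = (n : ℂ) * (2 * Real.pi) := by
        have hn' : ((2 * Real.pi * ((l:ℝ) - (k:ℝ)) / N : ℝ) : ℂ) * Complex.I
            = ((n : ℂ) * (2 * Real.pi)) * Complex.I := by rw [hn]; ring
        exact mul_right_cancel₀ Complex.I_ne_zero hn'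
      have hR : (2 * Real.pi * ((l:ℝ) - (k:ℝ)) / N : ℝ) = (n : ℝ) * (2 * Real.pi) := by
        exact_mod_cast hI
      have hpi : (0:ℝ) < Real.pi := Real.pi_pos
      have hlk : (l:ℝ) - (k:ℝ) = n * N := by
        field_simp at hR
        nlinarith [hR]
      have hlb : |(l:ℝ) - (k:ℝ)| < N := by
        rw [abs_sub_lt_iff]
        constructor <;> push_cast <;>
          [skip; skip] <;> nlinarith [Fin.is_lt l, Fin.is_lt k,
            (by exact_mod_cast Fin.is_lt l : ((l:ℕ):ℝ) < N),
            (by exact_mod_cast Fin.is_lt k : ((k:ℕ):ℝ) < N)]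
      rcases eq_or_ne n 0 with rfl | hn0
      · simp at hlk
        have : (l:ℕ) = (k:ℕ) := by exact_mod_cast sub_eq_zero.mp hlk
        exact hkl (Fin.ext this.symm)
      · have : (N:ℝ) ≤ |(l:ℝ) - (k:ℝ)| := by
          rw [hlk, abs_mul, _root_.abs_of_nonneg hNR.le]
          have : (1:ℝ) ≤ |(n:ℝ)| := by
            rw [← Int.cast_abs]
            exact_mod_cast Int.one_le_abs hn0
          nlinarith
        linarith
    have : ∑ j : Fin N, ζ ^ (j : ℕ) = 0 := by
      rw [Fin.sum_univ_eq_sum_range (fun i => ζ ^ i)]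
      rw [geom_sum_eq hζ1, hζN]
      simp
    rw [this]
    simp [Matrix.one_apply, Matrix.smul_apply, hkl]

open Matrix

/-- Lemma 7.4: for every `N ≥ 1` there is an `N × N` matrix `Z` with unimodular entries
whose Schur multiplier norm on `S_p` equals `N^{1/p - 1/2}` for every `p ∈ (0, 2]`. -/
theorem stmt19 (N : ℕ) (hN : 0 < N) :
    ∃ Z : Matrix (Fin N) (Fin N) ℂ, (∀ j k, ‖Z j k‖ = 1) ∧
      ∀ p : ℝ, 0 < p → p ≤ 2 →
        sSup {c : ℝ | ∃ B : Matrix (Fin N) (Fin N) ℂ, schattenNorm p B ≤ 1 ∧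
            c = schattenNorm p (Matrix.hadamard Z B)} =
          (N : ℝ) ^ (1 / p - 1 / 2) := by
  have hNR : (0:ℝ) < N := by exact_mod_cast hN
  have hNC : (N:ℂ) ≠ 0 := by exact_mod_cast hN.ne'
  refine ⟨fourierZ N, fourierZ_abs N, ?_⟩
  intro p hp hp2
  set Z := fourierZ N with hZdef
  set M := (N:ℝ) ^ (1/p - 1/2) with hMdef
  -- the witness matrix B₀ with all entries 1/N
  set B₀ : Matrix (Fin N) (Fin N) ℂ := Matrix.of (fun _ _ => (N:ℂ)⁻¹) with hB₀
  have hBB : B₀ᴴ * B₀ = Matrix.of (fun _ _ => (N:ℂ)⁻¹) := by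
    ext k l
    simp only [Matrix.mul_apply, Matrix.conjTranspose_apply, hB₀, Matrix.of_apply,
      Complex.star_def, map_inv₀, Complex.conj_natCast, Finset.sum_const,
      Finset.card_univ, Fintype.card_fin, nsmul_eq_mul]
    field_simp
  have hidem : (B₀ᴴ * B₀) * (B₀ᴴ * B₀) = B₀ᴴ * B₀ := by
    rw [hBB]
    ext k l
    simp only [Matrix.mul_apply, Matrix.of_apply, Finset.sum_const, Finset.card_univ,
      Fintype.card_fin, nsmul_eq_mul]
    field_simp
  have heigB := eig_idem' (Matrix.isHermitian_conjTranspose_mul_self B₀) hidem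
  have hsumB : ∑ i, (Matrix.isHermitian_conjTranspose_mul_self B₀).eigenvalues i = 1 := by
    have h1 := eig_sum_trace' (Matrix.isHermitian_conjTranspose_mul_self B₀)
    have h2 : (B₀ᴴ * B₀).trace = 1 := by
      rw [hBB]
      simp only [Matrix.trace, Matrix.diag, Matrix.of_apply, Finset.sum_const,
        Finset.card_univ, Fintype.card_fin, nsmul_eq_mul]
      field_simp
    rw [h2] at h1
    exact_mod_cast h1
  have hnormB : schattenNorm p B₀ = 1 := by
    rw [schattenNorm]
    have : ∀ i, Real.sqrt ((Matrix.isHermitian_conjTranspose_mul_self B₀).eigenvalues i) ^ p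
        = (Matrix.isHermitian_conjTranspose_mul_self B₀).eigenvalues i := by
      intro i
      rcases heigB i with h | h <;> rw [h]
      · rw [Real.sqrt_zero, Real.zero_rpow hp.ne']
      · rw [Real.sqrt_one, Real.one_rpow]
    rw [Finset.sum_congr rfl (fun i _ => this i), hsumB, Real.one_rpow]
  -- the matrix Z ⋆ B₀ = Z / N
  have hCeq : Matrix.hadamard Z B₀ = (N:ℂ)⁻¹ • Z := by
    ext j k
    simp only [Matrix.hadamard_apply, hB₀, Matrix.of_apply, Matrix.smul_apply, smul_eq_mul]
    ring
  have hCC : (Matrix.hadamard Z B₀)ᴴ * (Matrix.hadamard Z B₀)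
      = ((((N:ℝ)⁻¹ : ℝ) : ℂ)) • 1 := by
    rw [hCeq, Matrix.conjTranspose_smul, Matrix.smul_mul, Matrix.mul_smul,
      hZdef, fourierZ_mul N hN, smul_smul, smul_smul]
    congr 1
    simp only [Complex.star_def, map_inv₀, Complex.conj_natCast]
    push_cast
    field_simp
  have heigC : ∀ i, (Matrix.isHermitian_conjTranspose_mul_self (Matrix.hadamard Z B₀)).eigenvalues i
      = (N:ℝ)⁻¹ :=
    eig_const' _ hCC
  have hnormC : schattenNorm p (Matrix.hadamard Z B₀) = M := by
    rw [schattenNorm]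
    simp only [heigC, Finset.sum_const, Finset.card_univ, Fintype.card_fin, nsmul_eq_mul]
    have h1 : Real.sqrt ((N:ℝ)⁻¹) ^ p = (N:ℝ) ^ (-(p/2)) := by
      rw [Real.sqrt_eq_rpow, ← Real.rpow_mul (by positivity),
        show ((N:ℝ))⁻¹ = (N:ℝ) ^ (-1:ℝ) by rw [Real.rpow_neg_one],
        ← Real.rpow_mul hNR.le]
      congr 1
      ring
    rw [h1]
    have h2 : (N:ℝ) * (N:ℝ) ^ (-(p/2)) = (N:ℝ) ^ (1 - p/2) := by
      rw [show (1 - p/2 : ℝ) = 1 + -(p/2) by ring, Real.rpow_add hNR, Real.rpow_one]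
    rw [h2, ← Real.rpow_mul hNR.le, hMdef]
    congr 1
    rw [sub_mul, one_mul]
    congr 1
    field_simp
  -- upper bound
  have hub : ∀ c ∈ {c : ℝ | ∃ B : Matrix (Fin N) (Fin N) ℂ, schattenNorm p B ≤ 1 ∧
      c = schattenNorm p (Matrix.hadamard Z B)}, c ≤ M := by
    rintro c ⟨B, hB, rfl⟩
    set t : Fin N → ℝ := fun i =>
      Real.sqrt ((Matrix.isHermitian_conjTranspose_mul_self (Matrix.hadamard Z B)).eigenvalues i)
      with ht
    set β : Fin N → ℝ := fun i =>
      Real.sqrt ((Matrix.isHermitian_conjTranspose_mul_self B).eigenvalues i) with hβ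
    have htn : ∀ i, 0 ≤ t i := fun i => Real.sqrt_nonneg _
    have hβn : ∀ i, 0 ≤ β i := fun i => Real.sqrt_nonneg _
    have hsq : ∀ (A : Matrix (Fin N) (Fin N) ℂ) (i : Fin N),
        Real.sqrt ((Matrix.isHermitian_conjTranspose_mul_self A).eigenvalues i) ^ (2:ℝ)
          = (Matrix.isHermitian_conjTranspose_mul_self A).eigenvalues i := by
      intro A i
      rw [show (2:ℝ) = ((2:ℕ):ℝ) by norm_num, Real.rpow_natCast, Real.sq_sqrt
        (Matrix.eigenvalues_conjTranspose_mul_self_nonneg A i)]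
    have h2eq : ∑ i, t i ^ (2:ℝ) = ∑ i, β i ^ (2:ℝ) := by
      simp only [ht, hβ, hsq]
      rw [eig_sum_normSq', eig_sum_normSq']
      refine Finset.sum_congr rfl fun j _ => Finset.sum_congr rfl fun k _ => ?_
      rw [Matrix.hadamard_apply, Complex.normSq_mul]
      have : Complex.normSq (Z j k) = 1 := by
        have := fourierZ_abs N j k
        rw [← Complex.sq_norm, hZdef, this, one_pow]
      rw [this, one_mul]
    have hA3 : ∑ i, β i ^ p ≤ 1 := by
      have hs0 : 0 ≤ ∑ i, β i ^ p := Finset.sum_nonneg fun i _ => Real.rpow_nonneg (hβn i) p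
      have : ((∑ i, β i ^ p) ^ (1/p)) ^ p ≤ 1 ^ p :=
        Real.rpow_le_rpow (Real.rpow_nonneg hs0 _) hB hp.le
      rwa [one_div, Real.rpow_inv_rpow hs0 hp.ne', Real.one_rpow] at this
    have chain : ∑ i, t i ^ p ≤ (N:ℝ) ^ (1 - p/2) := by
      calc ∑ i, t i ^ p ≤ (N:ℝ) ^ (1 - p/2) * (∑ i, t i ^ (2:ℝ)) ^ (p/2) :=
            holder_up' t htn hp hp2
        _ = (N:ℝ) ^ (1 - p/2) * (∑ i, β i ^ (2:ℝ)) ^ (p/2) := by rw [h2eq]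
        _ ≤ (N:ℝ) ^ (1 - p/2) * (∑ i, β i ^ p) := by
            exact mul_le_mul_of_nonneg_left (sum_sq_le' β hβn hp hp2) (by positivity)
        _ ≤ (N:ℝ) ^ (1 - p/2) * 1 := by
            exact mul_le_mul_of_nonneg_left hA3 (by positivity)
        _ = (N:ℝ) ^ (1 - p/2) := by rw [mul_one]
    rw [schattenNorm]
    calc (∑ i, t i ^ p) ^ (1/p) ≤ ((N:ℝ) ^ (1 - p/2)) ^ (1/p) := by
          apply Real.rpow_le_rpow (Finset.sum_nonneg fun i _ => Real.rpow_nonneg (htn i) p)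
            chain (by positivity)
      _ = M := by
          rw [← Real.rpow_mul hNR.le, hMdef]
          congr 1
          rw [sub_mul, one_mul]
          congr 1
          field_simp
  have hmem : M ∈ {c : ℝ | ∃ B : Matrix (Fin N) (Fin N) ℂ, schattenNorm p B ≤ 1 ∧
      c = schattenNorm p (Matrix.hadamard Z B)} :=
    ⟨B₀, le_of_eq hnormB, hnormC.symm⟩
  exact le_antisymm (csSup_le ⟨M, hmem⟩ hub) (le_csSup ⟨M, hub⟩ hmem)
end
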